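/- arXiv:2304.11248 — 8 statements merged into one kernel-verified Lean document; each statement's English description precedes it below -/
import Mathlib

section
/- Let t : Fin 4 → ℝ be a temporal covector and h a spatial metric compatible with t. Let C : Fin 4 → Fin 4 → Fin 4 → ℝ (written C^a_{bc}) be a connecting field that is symmetric in its lower indices (C^a_{bc} = C^a_{cb} for all a,b,c). Then C is metric-compatible (i.e. t_a C^a_{bc} = 0 for all b,c, and C^b_{an} h^{nc} + C^c_{an} h^{bn} = 0 for all a,b,c) if and only if there exists an antisymmetric matrix κ : Fin 4 → Fin 4 → ℝ (κ_{ab} = −κ_{ba}) such that C^a_{bc} = h^{an}(t_b κ_{cn} + t_c κ_{bn}) for all a,b,c. -/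
open Finset

noncomputable def Tmap (t : Fin 4 → ℝ) : (Fin 4 → ℝ) →ₗ[ℝ] ℝ where
  toFun v := ∑ a, t a * v a
  map_add' x y := by simp [mul_add, Finset.sum_add_distrib]
  map_smul' c x := by
    simp only [smul_eq_mul, Pi.smul_apply, RingHom.id_apply, Finset.mul_sum]
    exact Finset.sum_congr rfl fun a _ => by ring

noncomputable def Hmap (h : Fin 4 → Fin 4 → ℝ) : (Fin 4 → ℝ) →ₗ[ℝ] (Fin 4 → ℝ) :=
  Matrix.toLin' (Matrix.of h)

lemma Hmap_apply (h : Fin 4 → Fin 4 → ℝ) (x : Fin 4 → ℝ) (a : Fin 4) :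
    Hmap h x a = ∑ n, h a n * x n := by
  simp [Hmap, Matrix.toLin'_apply, Matrix.mulVec, dotProduct]

lemma exists_preimage
    (t : Fin 4 → ℝ) (ht : t ≠ 0)
    (h : Fin 4 → Fin 4 → ℝ)
    (hsym : ∀ a b, h a b = h b a)
    (horth : ∀ a, ∑ b, h a b * t b = 0)
    (hrad : ∀ ω : Fin 4 → ℝ, (∀ b, ∑ a, ω a * h a b = 0) ↔ ∃ k : ℝ, ω = k • t)
    (v : Fin 4 → ℝ) (hv : ∑ a, t a * v a = 0) :
    ∃ ω : Fin 4 → ℝ, ∀ a, ∑ n, h a n * ω n = v a := by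
  -- ker Hmap = span {t}
  have hker : LinearMap.ker (Hmap h) = Submodule.span ℝ {t} := by
    ext x
    simp only [LinearMap.mem_ker, Submodule.mem_span_singleton]
    constructor
    · intro hx
      have hx' : ∀ b, ∑ a, x a * h a b = 0 := by
        intro b
        have h1 := congrFun hx b
        rw [Hmap_apply] at h1
        rw [show (∑ a, x a * h a b) = ∑ a, h b a * x a from
          Finset.sum_congr rfl fun a _ => by rw [hsym a b]; ring]
        simpa using h1
      obtain ⟨k, hk⟩ := (hrad x).mp hx'
      exact ⟨k, hk.symm⟩
    · rintro ⟨k, rfl⟩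
      funext a
      rw [Hmap_apply]
      simp only [Pi.smul_apply, smul_eq_mul]
      rw [show (∑ n, h a n * (k * t n)) = k * ∑ n, h a n * t n by
        rw [Finset.mul_sum]; exact Finset.sum_congr rfl fun n _ => by ring]
      simp [horth a]
  -- range Hmap ≤ ker Tmap
  have hle : LinearMap.range (Hmap h) ≤ LinearMap.ker (Tmap t) := by
    rintro _ ⟨x, rfl⟩
    simp only [LinearMap.mem_ker, Tmap, LinearMap.coe_mk, AddHom.coe_mk]
    have : ∀ a, t a * Hmap h x a = ∑ n, t a * (h a n * x n) := by
      intro a; rw [Hmap_apply, Finset.mul_sum]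
    rw [Finset.sum_congr rfl fun a _ => this a, Finset.sum_comm]
    have : ∀ n, ∑ a, t a * (h a n * x n) = (∑ a, h n a * t a) * x n := by
      intro n; rw [Finset.sum_mul]
      exact Finset.sum_congr rfl fun a _ => by rw [hsym n a]; ring
    rw [Finset.sum_congr rfl fun n _ => this n]
    have horth' : ∀ n, (∑ a, h n a * t a) = 0 := horth
    simp [horth']
  -- finrank computations
  have hkerdim : Module.finrank ℝ (LinearMap.ker (Hmap h)) = 1 := by
    rw [hker]; exact finrank_span_singleton ht
  have hrange : Module.finrank ℝ (LinearMap.range (Hmap h)) = 3 := by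
    have := LinearMap.finrank_range_add_finrank_ker (Hmap h)
    rw [hkerdim] at this
    simp at this
    omega
  have hTkerdim : Module.finrank ℝ (LinearMap.ker (Tmap t)) = 3 := by
    have hsurj : LinearMap.range (Tmap t) = ⊤ := by
      rw [LinearMap.range_eq_top]
      intro c
      obtain ⟨i, hi⟩ : ∃ i, t i ≠ 0 := by
        by_contra hcon
        push_neg at hcon
        exact ht (funext fun i => hcon i)
      refine ⟨fun a => if a = i then c / t i else 0, ?_⟩
      simp only [Tmap, LinearMap.coe_mk, AddHom.coe_mk, mul_ite, mul_zero]
      rw [Finset.sum_ite_eq' univ i]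
      simp [hi]
      field_simp
    have := LinearMap.finrank_range_add_finrank_ker (Tmap t)
    rw [hsurj] at this
    simp at this
    omega
  have heq : LinearMap.range (Hmap h) = LinearMap.ker (Tmap t) :=
    Submodule.eq_of_le_of_finrank_eq hle (by rw [hrange, hTkerdim])
  have hvmem : v ∈ LinearMap.ker (Tmap t) := hv
  rw [← heq] at hvmem
  obtain ⟨ω, hω⟩ := hvmem
  exact ⟨ω, fun a => by rw [← Hmap_apply, hω]⟩

lemma backward_rearrange (h κ : Fin 4 → Fin 4 → ℝ) (t : Fin 4 → ℝ) (a b c : Fin 4) :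
    ∑ n, ((∑ m, h b m * (t a * κ n m + t n * κ a m)) * h n c
         + (∑ m, h c m * (t a * κ n m + t n * κ a m)) * h b n)
      = t a * ((∑ m, ∑ n, h b m * h n c * κ n m) + (∑ m, ∑ n, h c m * h b n * κ n m))
        + (∑ n, h n c * t n) * (∑ m, h b m * κ a m)
        + (∑ n, h b n * t n) * (∑ m, h c m * κ a m) := by
  simp only [Fin.sum_univ_four]; ring

lemma cond1_rearrange (h : Fin 4 → Fin 4 → ℝ) (t X : Fin 4 → ℝ) :
    ∑ a, t a * (∑ n, h a n * X n) = ∑ n, (∑ a, t a * h a n) * X n := by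
  simp only [Fin.sum_univ_four]; ring

section
variable (t : Fin 4 → ℝ) (h : Fin 4 → Fin 4 → ℝ)
  (hsym : ∀ a b, h a b = h b a)
  (horth : ∀ a, ∑ b, h a b * t b = 0)

include hsym horth in
lemma backward_dir
    (C : Fin 4 → Fin 4 → Fin 4 → ℝ)
    (κ : Fin 4 → Fin 4 → ℝ) (hκ : ∀ a b, κ a b = - κ b a)
    (hC : ∀ a b c, C a b c = ∑ n, h a n * (t b * κ c n + t c * κ b n)) :
    ((∀ b c, ∑ a, t a * C a b c = 0) ∧
      (∀ a b c, ∑ n, (C b a n * h n c + C c a n * h b n) = 0)) := by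
  have horth' : ∀ n, ∑ a, t a * h a n = 0 := by
    intro n
    rw [show (∑ a, t a * h a n) = ∑ a, h n a * t a from
      Finset.sum_congr rfl fun a _ => by rw [hsym n a]; ring]
    exact horth n
  constructor
  · intro b c
    rw [Finset.sum_congr rfl fun a _ => by rw [hC a b c]]
    rw [cond1_rearrange]
    simp [horth']
  · intro a b c
    rw [Finset.sum_congr rfl fun n (_ : n ∈ univ) => by
      rw [hC b a n, hC c a n]]
    rw [backward_rearrange]
    have e1 : (∑ n, h n c * t n) = 0 := by
      rw [Finset.sum_congr rfl fun n (_ : n ∈ univ) => by rw [hsym n c]]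
      exact horth c
    have e2 : (∑ n, h b n * t n) = 0 := horth b
    have e3 : (∑ m, ∑ n, h c m * h b n * κ n m) = - ∑ m, ∑ n, h b m * h n c * κ n m := by
      rw [Finset.sum_comm]
      calc ∑ n, ∑ m, h c m * h b n * κ n m
          = ∑ n, ∑ m, -(h b n * h m c * κ m n) := by
            refine Finset.sum_congr rfl fun n _ => Finset.sum_congr rfl fun m _ => ?_
            rw [hκ n m, hsym c m]; ring
        _ = - ∑ n, ∑ m, h b n * h m c * κ m n := by
            simp [Finset.sum_neg_distrib]
    rw [e1, e2, e3]
    ring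
end

lemma quad_rearrange (h L : Fin 4 → Fin 4 → ℝ) (ξ η : Fin 4 → ℝ) :
    ∑ m, ∑ n, (∑ p, h m p * ξ p) * L m n * (∑ q, h n q * η q)
      = ∑ p, ∑ q, ξ p * η q * (∑ m, ∑ n, h m p * L m n * h n q) := by
  simp only [Fin.sum_univ_four]; ring

lemma inner_rearrange (h lamA : Fin 4 → Fin 4 → ℝ) (p q : Fin 4) :
    ∑ m, ∑ n, h m p * (lamA m n + lamA n m) * h n q
      = ∑ n, (∑ m, h m p * lamA m n) * h n q + ∑ m, (∑ n, lamA n m * h n q) * h m p := by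
  simp only [Fin.sum_univ_four]; ring

lemma bexp (S : Fin 4 → Fin 4 → ℝ) (x y v : Fin 4 → ℝ) (tm tn : ℝ) :
    ∑ p, ∑ q, (x p - tm * v p) * S p q * (y q - tn * v q)
      = (∑ p, ∑ q, x p * S p q * y q) - tn * (∑ p, ∑ q, x p * S p q * v q)
        - tm * (∑ p, ∑ q, v p * S p q * y q)
        + tm * tn * (∑ p, ∑ q, v p * S p q * v q) := by
  simp only [Fin.sum_univ_four]; ring

lemma ev1 (S : Fin 4 → Fin 4 → ℝ) (m n : Fin 4) :
    ∑ p, ∑ q, (if p = m then (1:ℝ) else 0) * S p q * (if q = n then (1:ℝ) else 0)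
      = S m n := by
  simp [ite_mul, mul_ite, Finset.sum_ite_eq', Finset.sum_ite_eq]

lemma ev2 (S : Fin 4 → Fin 4 → ℝ) (v : Fin 4 → ℝ) (m : Fin 4) :
    ∑ p, ∑ q, (if p = m then (1:ℝ) else 0) * S p q * v q = ∑ q, S m q * v q := by
  simp [ite_mul, mul_ite, Finset.sum_ite_eq', Finset.sum_ite_eq]

lemma ev3 (S : Fin 4 → Fin 4 → ℝ) (v : Fin 4 → ℝ) (n : Fin 4) :
    ∑ p, ∑ q, v p * S p q * (if q = n then (1:ℝ) else 0) = ∑ p, v p * S p n := by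
  simp [ite_mul, mul_ite, Finset.sum_ite_eq', Finset.sum_ite_eq]

section
variable (t : Fin 4 → ℝ) (ht : t ≠ 0) (h : Fin 4 → Fin 4 → ℝ)
  (hsym : ∀ a b, h a b = h b a)
  (horth : ∀ a, ∑ b, h a b * t b = 0)
  (hrad : ∀ ω : Fin 4 → ℝ, (∀ b, ∑ a, ω a * h a b = 0) ↔ ∃ k : ℝ, ω = k • t)

include ht hsym horth hrad in
lemma forward_dir
    (C : Fin 4 → Fin 4 → Fin 4 → ℝ)
    (hCsym : ∀ a b c, C a b c = C a c b)
    (cond1 : ∀ b c, ∑ a, t a * C a b c = 0)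
    (cond2 : ∀ a b c, ∑ n, (C b a n * h n c + C c a n * h b n) = 0) :
    ∃ κ : Fin 4 → Fin 4 → ℝ, (∀ a b, κ a b = - κ b a) ∧
        (∀ a b c, C a b c = ∑ n, h a n * (t b * κ c n + t c * κ b n)) := by
  classical
  -- Step 1: find lam with C a b c = ∑ m, h a m * lam m b c, lam symmetric in last two
  have hex : ∀ b c, ∃ ω : Fin 4 → ℝ, ∀ a, ∑ n, h a n * ω n = C a b c :=
    fun b c => exists_preimage t ht h hsym horth hrad _ (cond1 b c)
  choose lam0 hlam0 using hex
  set lam : Fin 4 → Fin 4 → Fin 4 → ℝ := fun m b c => (lam0 b c m + lam0 c b m) / 2 with hlamdef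
  have hlam : ∀ a b c, ∑ m, h a m * lam m b c = C a b c := by
    intro a b c
    calc ∑ m, h a m * lam m b c
        = ((∑ m, h a m * lam0 b c m) + ∑ m, h a m * lam0 c b m) / 2 := by
          rw [← Finset.sum_add_distrib, Finset.sum_div]
          exact Finset.sum_congr rfl fun m _ => by simp only [hlamdef]; ring
      _ = (C a b c + C a c b) / 2 := by rw [hlam0, hlam0]
      _ = C a b c := by rw [← hCsym a b c]; ring
  have hlamsym : ∀ m b c, lam m b c = lam m c b := fun m b c => by
    simp only [hlamdef]; ring
  -- Step 2: key vanishing on ker T × ker T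
  have key : ∀ (a : Fin 4) (x y : Fin 4 → ℝ), (∑ p, t p * x p = 0) → (∑ p, t p * y p = 0) →
      ∑ m, ∑ n, x m * (lam m a n + lam n a m) * y n = 0 := by
    intro a x y hx hy
    obtain ⟨ξ, hξ⟩ := exists_preimage t ht h hsym horth hrad x hx
    obtain ⟨η, hη⟩ := exists_preimage t ht h hsym horth hrad y hy
    have step : ∑ m, ∑ n, x m * (lam m a n + lam n a m) * y n
        = ∑ m, ∑ n, (∑ p, h m p * ξ p) * (lam m a n + lam n a m) * (∑ q, h n q * η q) := by
      refine Finset.sum_congr rfl fun m _ => Finset.sum_congr rfl fun n _ => ?_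
      rw [hξ m, hη n]
    rw [step, quad_rearrange]
    have inner : ∀ p q, (∑ m, ∑ n, h m p * (lam m a n + lam n a m) * h n q) = 0 := by
      intro p q
      rw [inner_rearrange]
      have e1 : ∀ n, (∑ m, h m p * lam m a n) = C p a n := by
        intro n
        rw [show (∑ m, h m p * lam m a n) = ∑ m, h p m * lam m a n from
          Finset.sum_congr rfl fun m _ => by rw [hsym m p]]
        exact hlam p a n
      have e2 : ∀ m, (∑ n, lam n a m * h n q) = C q a m := by
        intro m
        rw [show (∑ n, lam n a m * h n q) = ∑ n, h q n * lam n a m from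
          Finset.sum_congr rfl fun n _ => by rw [hsym n q]; ring]
        exact hlam q a m
      have A : (∑ n, (∑ m, h m p * lam m a n) * h n q) = ∑ n, C p a n * h n q :=
        Finset.sum_congr rfl fun n _ => by rw [e1 n]
      have B : (∑ m, (∑ n, lam n a m * h n q) * h m p) = ∑ m, C q a m * h p m :=
        Finset.sum_congr rfl fun m _ => by rw [e2 m, hsym m p]
      rw [A, B, ← Finset.sum_add_distrib]
      exact cond2 a p q
    rw [Finset.sum_congr rfl fun p _ => Finset.sum_congr rfl fun q _ => by rw [inner p q]]
    simp
  -- Step 3: v₀ with ∑ t * v₀ = 1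
  obtain ⟨i, hi⟩ : ∃ i, t i ≠ 0 := by
    by_contra hcon; push_neg at hcon; exact ht (funext fun i => hcon i)
  set v₀ : Fin 4 → ℝ := fun a => if a = i then (t i)⁻¹ else 0 with hv₀def
  have hv₀ : ∑ p, t p * v₀ p = 1 := by
    simp only [hv₀def, mul_ite, mul_zero]
    rw [Finset.sum_ite_eq' univ i]
    simp [hi]
  -- Step 4: g, qa and the relation
  set g : Fin 4 → Fin 4 → ℝ := fun a m => ∑ q, (lam m a q + lam q a m) * v₀ q with hgdef
  set qa : Fin 4 → ℝ := fun a => ∑ p, ∑ q, v₀ p * (lam p a q + lam q a p) * v₀ q with hqadef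
  have Hrel : ∀ a m n, lam m a n + lam n a m
      = t n * g a m + t m * g a n - t m * t n * qa a := by
    intro a m n
    have hx0 : ∑ p, t p * ((if p = m then (1:ℝ) else 0) - t m * v₀ p) = 0 := by
      have : ∑ p, t p * ((if p = m then (1:ℝ) else 0) - t m * v₀ p)
          = (∑ p, t p * (if p = m then (1:ℝ) else 0)) - t m * (∑ p, t p * v₀ p) := by
        rw [Finset.mul_sum, ← Finset.sum_sub_distrib]
        exact Finset.sum_congr rfl fun p _ => by ring
      rw [this, hv₀]
      simp [mul_ite, Finset.sum_ite_eq']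
    have hy0 : ∑ p, t p * ((if p = n then (1:ℝ) else 0) - t n * v₀ p) = 0 := by
      have : ∑ p, t p * ((if p = n then (1:ℝ) else 0) - t n * v₀ p)
          = (∑ p, t p * (if p = n then (1:ℝ) else 0)) - t n * (∑ p, t p * v₀ p) := by
        rw [Finset.mul_sum, ← Finset.sum_sub_distrib]
        exact Finset.sum_congr rfl fun p _ => by ring
      rw [this, hv₀]
      simp [mul_ite, Finset.sum_ite_eq']
    have hB := key a _ _ hx0 hy0
    rw [bexp (fun p q => lam p a q + lam q a p)
        (fun p => if p = m then (1:ℝ) else 0) (fun q => if q = n then (1:ℝ) else 0) v₀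
        (t m) (t n)] at hB
    rw [ev1 (fun p q => lam p a q + lam q a p) m n,
        ev2 (fun p q => lam p a q + lam q a p) v₀ m,
        ev3 (fun p q => lam p a q + lam q a p) v₀ n] at hB
    have e2' : (∑ q, (lam m a q + lam q a m) * v₀ q) = g a m := rfl
    have e3' : (∑ p, v₀ p * (lam p a n + lam n a p)) = g a n := by
      simp only [hgdef]
      exact Finset.sum_congr rfl fun p _ => by ring
    rw [show (∑ q, (fun p q => lam p a q + lam q a p) m q * v₀ q) = g a m from e2',
        show (∑ p, v₀ p * (fun p q => lam p a q + lam q a p) p n) = g a n from e3'] at hB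
    have e4 : (∑ p, ∑ q, v₀ p * (fun p q => lam p a q + lam q a p) p q * v₀ q) = qa a := rfl
    rw [e4] at hB
    linarith [hB]
  -- Step 5: κ and final formula
  refine ⟨fun x y => (g x y - g y x) / 2 - (t y * qa x - t x * qa y) / 4, fun a b => by ring, ?_⟩
  intro a b c
  have lamid : ∀ m b c, lam m b c
      = t m * ((g b c + g c b) / 2 - (t c * qa b + t b * qa c) / 4)
        + t b * ((g c m - g m c) / 2 - (t m * qa c - t c * qa m) / 4)
        + t c * ((g b m - g m b) / 2 - (t m * qa b - t b * qa m) / 4) := by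
    intro m b c
    have H1 := Hrel b m c
    have H2 := Hrel c b m
    have H3 := Hrel m c b
    have E1 := hlamsym c b m
    have E2 := hlamsym b c m
    have E3 := hlamsym m c b
    linear_combination (H1 + H2 - H3 - E1 - E2 - E3) / 2
  rw [← hlam a b c]
  have split : ∀ m, h a m * lam m b c
      = h a m * (t b * ((g c m - g m c) / 2 - (t m * qa c - t c * qa m) / 4)
           + t c * ((g b m - g m b) / 2 - (t m * qa b - t b * qa m) / 4))
        + (h a m * t m) * ((g b c + g c b) / 2 - (t c * qa b + t b * qa c) / 4) := by
    intro m; rw [lamid m b c]; ring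
  calc ∑ m, h a m * lam m b c
      = (∑ m, h a m * (t b * ((g c m - g m c) / 2 - (t m * qa c - t c * qa m) / 4)
           + t c * ((g b m - g m b) / 2 - (t m * qa b - t b * qa m) / 4)))
        + (∑ m, h a m * t m) * ((g b c + g c b) / 2 - (t c * qa b + t b * qa c) / 4) := by
        rw [Finset.sum_mul, ← Finset.sum_add_distrib]
        exact Finset.sum_congr rfl fun m _ => split m
    _ = ∑ n, h a n * (t b * ((g c n - g n c) / 2 - (t n * qa c - t c * qa n) / 4)
           + t c * ((g b n - g n b) / 2 - (t n * qa b - t b * qa n) / 4)) := by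
        rw [horth a]; ring
end

/-- For a connecting field `C^a_{bc}` symmetric in its lower indices,
metric compatibility with a temporal covector `t` and spatial metric `h` holds iff
`C^a_{bc} = h^{an}(t_b κ_{cn} + t_c κ_{bn})` for some antisymmetric `κ`. -/


theorem connecting_field_compatible_iff_symmetric
    (t : Fin 4 → ℝ) (ht : t ≠ 0)
    (h : Fin 4 → Fin 4 → ℝ)
    (hsym : ∀ a b, h a b = h b a)
    (hpsd : ∀ ω : Fin 4 → ℝ, 0 ≤ ∑ a, ∑ b, ω a * h a b * ω b)
    (horth : ∀ a, ∑ b, h a b * t b = 0)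
    (hrad : ∀ ω : Fin 4 → ℝ, (∀ b, ∑ a, ω a * h a b = 0) ↔ ∃ k : ℝ, ω = k • t)
    (C : Fin 4 → Fin 4 → Fin 4 → ℝ)
    (hCsym : ∀ a b c, C a b c = C a c b) :
    ((∀ b c, ∑ a, t a * C a b c = 0) ∧
      (∀ a b c, ∑ n, (C b a n * h n c + C c a n * h b n) = 0))
    ↔ ∃ κ : Fin 4 → Fin 4 → ℝ, (∀ a b, κ a b = - κ b a) ∧
        (∀ a b c, C a b c = ∑ n, h a n * (t b * κ c n + t c * κ b n)) := by
  constructor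
  · rintro ⟨cond1, cond2⟩
    exact forward_dir t ht h hsym horth hrad C hCsym cond1 cond2
  · rintro ⟨κ, hκ, hC⟩
    exact backward_dir t h hsym horth C κ hκ hC
end

section
/- Let t : Fin 4 → ℝ be a temporal covector and h a spatial metric compatible with t. Let C : Fin 4 → Fin 4 → Fin 4 → ℝ (written C^a_{bc}) be a connecting field, not assumed symmetric in its lower indices. Then C is metric-compatible (i.e. t_a C^a_{bc} = 0 for all b,c, and C^b_{an} h^{nc} + C^c_{an} h^{bn} = 0 for all a,b,c) if and only if there exists an array κ : Fin 4 → Fin 4 → Fin 4 → ℝ (written κ_{rbc}) such that C^a_{bc} = h^{ar}(κ_{rbc} − κ_{cbr}) for all a,b,c. -/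
/-- For a connecting field `C^a_{bc}` (not assumed symmetric in its lower
indices), metric compatibility with a temporal covector `t` and spatial metric `h` holds
iff `C^a_{bc} = h^{ar}(κ_{rbc} − κ_{cbr})` for some array `κ`. -/
theorem connecting_field_compatible_iff_torsional
    (t : Fin 4 → ℝ) (ht : t ≠ 0)
    (h : Fin 4 → Fin 4 → ℝ)
    (hsym : ∀ a b, h a b = h b a)
    (hpsd : ∀ ω : Fin 4 → ℝ, 0 ≤ ∑ a, ∑ b, ω a * h a b * ω b)
    (horth : ∀ a, ∑ b, h a b * t b = 0)
    (hrad : ∀ ω : Fin 4 → ℝ, (∀ b, ∑ a, ω a * h a b = 0) ↔ ∃ k : ℝ, ω = k • t)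
    (C : Fin 4 → Fin 4 → Fin 4 → ℝ) :
    ((∀ b c, ∑ a, t a * C a b c = 0) ∧
      (∀ a b c, ∑ n, (C b a n * h n c + C c a n * h b n) = 0))
    ↔ ∃ κ : Fin 4 → Fin 4 → Fin 4 → ℝ,
        (∀ a b c, C a b c = ∑ r, h a r * (κ r b c - κ c b r)) := by
  classical
  have htt : (0:ℝ) < ∑ i, t i * t i := by
    have hne : ∃ i, t i ≠ 0 := by
      by_contra hc
      push_neg at hc
      exact ht (funext hc)
    obtain ⟨i, hi⟩ := hne
    exact Finset.sum_pos' (fun j _ => mul_self_nonneg (t j))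
      ⟨i, Finset.mem_univ i, mul_self_pos.mpr hi⟩
  set τ : ℝ := ∑ i, t i * t i with hτdef
  have hτ : τ ≠ 0 := ne_of_gt htt
  constructor
  · rintro ⟨h1, h2⟩
    -- Step 1: surjectivity of h onto the annihilator of t
    have hsurj : ∀ u : Fin 4 → ℝ, (∑ i, t i * u i = 0) →
        ∃ x : Fin 4 → ℝ, ∀ a, ∑ r, h a r * x r = u a := by
      set H : Matrix (Fin 4) (Fin 4) ℝ := Matrix.of h with hH
      set L : (Fin 4 → ℝ) →ₗ[ℝ] (Fin 4 → ℝ) := H.mulVecLin with hL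
      have hLapp : ∀ (x : Fin 4 → ℝ) (a : Fin 4), L x a = ∑ r, h a r * x r := by
        intro x a
        simp [hL, hH, Matrix.mulVecLin_apply, Matrix.mulVec, dotProduct]
      set f : (Fin 4 → ℝ) →ₗ[ℝ] ℝ :=
        { toFun := fun u => ∑ i, t i * u i
          map_add' := by intro u v; simp [mul_add, Finset.sum_add_distrib]
          map_smul' := by
            intro k u
            simp only [Pi.smul_apply, smul_eq_mul, RingHom.id_apply]
            rw [Finset.mul_sum]
            exact Finset.sum_congr rfl fun i _ => by ring } with hf
      have hker : LinearMap.ker L = Submodule.span ℝ {t} := by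
        ext ω
        rw [LinearMap.mem_ker, Submodule.mem_span_singleton]
        constructor
        · intro hw
          obtain ⟨k, hk⟩ := (hrad ω).mp (by
            intro b
            have h0 := congrFun hw b
            rw [hLapp] at h0
            simp only [Pi.zero_apply] at h0
            rw [← h0]
            exact Finset.sum_congr rfl fun a _ => by rw [hsym]; ring)
          exact ⟨k, hk.symm⟩
        · rintro ⟨k, rfl⟩
          funext a
          rw [hLapp]
          have : ∑ r, h a r * (k • t) r = k * ∑ r, h a r * t r := by
            rw [Finset.mul_sum]
            exact Finset.sum_congr rfl fun r _ => by simp; ring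
          rw [this, horth, mul_zero]; rfl
      have hkerrank : Module.finrank ℝ (LinearMap.ker L) = 1 := by
        rw [hker]; exact finrank_span_singleton ht
      have hrangerank : Module.finrank ℝ (LinearMap.range L) = 3 := by
        have := LinearMap.finrank_range_add_finrank_ker L
        rw [hkerrank, Module.finrank_fin_fun ℝ] at this
        omega
      have hfsurj : Function.Surjective f := by
        intro y
        refine ⟨(y / τ) • t, ?_⟩
        show ∑ i, t i * ((y / τ) • t) i = y
        have : ∑ i, t i * ((y / τ) • t) i = (y / τ) * ∑ i, t i * t i := by
          rw [Finset.mul_sum]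
          exact Finset.sum_congr rfl fun i _ => by simp; ring
        rw [this, ← hτdef]
        field_simp
      have hfrank : Module.finrank ℝ (LinearMap.ker f) = 3 := by
        have h1 := LinearMap.finrank_range_add_finrank_ker f
        rw [LinearMap.range_eq_top.mpr hfsurj, Module.finrank_fin_fun ℝ] at h1
        simp [finrank_top] at h1
        omega
      have hle : LinearMap.range L ≤ LinearMap.ker f := by
        rintro u ⟨x, rfl⟩
        rw [LinearMap.mem_ker]
        show ∑ i, t i * L x i = 0
        have : ∑ i, t i * L x i = ∑ r, (∑ i, h r i * t i) * x r := by
          simp only [hLapp, Finset.mul_sum]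
          rw [Finset.sum_comm]
          refine Finset.sum_congr rfl fun r _ => ?_
          rw [Finset.sum_mul]
          exact Finset.sum_congr rfl fun i _ => by rw [hsym]; ring
        rw [this]
        simp [horth]
      have heq : LinearMap.range L = LinearMap.ker f :=
        Submodule.eq_of_le_of_finrank_le hle (by rw [hfrank, hrangerank])
      intro u hu
      have : u ∈ LinearMap.range L := by
        rw [heq, LinearMap.mem_ker]; exact hu
      obtain ⟨x, hx⟩ := this
      exact ⟨x, fun a => by rw [← hLapp, hx]⟩
    -- Step 2: choose σ with h·σ = C
    have hex : ∀ b c, ∃ x : Fin 4 → ℝ, ∀ a, ∑ r, h a r * x r = C a b c := by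
      intro b c
      exact hsurj (fun a => C a b c) (h1 b c)
    choose σ hσ using hex
    -- symmetric part S
    set S : Fin 4 → Fin 4 → Fin 4 → ℝ := fun a r n => σ a n r + σ a r n with hSdef
    have hSsymm : ∀ a r n, S a r n = S a n r := by
      intro a r n; simp [hSdef, add_comm]
    -- Step 3: hh2' : h S h = 0
    have hh2' : ∀ a b c, ∑ r, ∑ n, h b r * h c n * S a r n = 0 := by
      intro a b c
      have eA : ∑ n, C b a n * h n c = ∑ r, ∑ n, h b r * h c n * σ a n r := by
        calc ∑ n, C b a n * h n c
            = ∑ n, ∑ r, h b r * σ a n r * h n c := by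
              refine Finset.sum_congr rfl fun n _ => ?_
              rw [← hσ a n b, Finset.sum_mul]
          _ = ∑ r, ∑ n, h b r * σ a n r * h n c := Finset.sum_comm
          _ = ∑ r, ∑ n, h b r * h c n * σ a n r := by
              refine Finset.sum_congr rfl fun r _ => Finset.sum_congr rfl fun n _ => ?_
              rw [hsym n c]; ring
      have eB : ∑ n, C c a n * h b n = ∑ r, ∑ n, h b r * h c n * σ a r n := by
        calc ∑ n, C c a n * h b n
            = ∑ n, ∑ r, h c r * σ a n r * h b n := by
              refine Finset.sum_congr rfl fun n _ => ?_
              rw [← hσ a n c, Finset.sum_mul]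
          _ = ∑ r, ∑ n, h b r * h c n * σ a r n := by
              refine Finset.sum_congr rfl fun x _ => Finset.sum_congr rfl fun y _ => ?_
              ring
      have h0 := h2 a b c
      rw [Finset.sum_add_distrib, eA, eB, ← Finset.sum_add_distrib] at h0
      rw [← h0]
      refine Finset.sum_congr rfl fun r _ => ?_
      rw [← Finset.sum_add_distrib]
      exact Finset.sum_congr rfl fun n _ => by simp [hSdef]; ring
    -- Step 4: Q vanishes on pairs from the range of h
    have hQ : ∀ (a : Fin 4) (v w : Fin 4 → ℝ),
        (∑ i, t i * v i = 0) → (∑ i, t i * w i = 0) →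
        ∑ r, ∑ n, v r * w n * S a r n = 0 := by
      intro a v w hv0 hw0
      obtain ⟨x, hx⟩ := hsurj v hv0
      obtain ⟨y, hy⟩ := hsurj w hw0
      have swap4 : ∀ F : Fin 4 → Fin 4 → Fin 4 → Fin 4 → ℝ,
          ∑ r, ∑ n, ∑ b, ∑ c, F r n b c = ∑ b, ∑ c, ∑ r, ∑ n, F r n b c := by
        intro F
        calc ∑ r, ∑ n, ∑ b, ∑ c, F r n b c
            = ∑ r, ∑ b, ∑ n, ∑ c, F r n b c :=
              Finset.sum_congr rfl fun r _ => Finset.sum_comm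
          _ = ∑ b, ∑ r, ∑ n, ∑ c, F r n b c := Finset.sum_comm
          _ = ∑ b, ∑ r, ∑ c, ∑ n, F r n b c :=
              Finset.sum_congr rfl fun b _ => Finset.sum_congr rfl fun r _ => Finset.sum_comm
          _ = ∑ b, ∑ c, ∑ r, ∑ n, F r n b c :=
              Finset.sum_congr rfl fun b _ => Finset.sum_comm
      calc ∑ r, ∑ n, v r * w n * S a r n
          = ∑ r, ∑ n, ∑ b, ∑ c, (x b * y c) * (h b r * h c n * S a r n) := by
            refine Finset.sum_congr rfl fun r _ => Finset.sum_congr rfl fun n _ => ?_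
            rw [← hx r, ← hy n, Finset.sum_mul_sum, Finset.sum_mul]
            refine Finset.sum_congr rfl fun b _ => ?_
            rw [Finset.sum_mul]
            exact Finset.sum_congr rfl fun c _ => by rw [hsym r b, hsym n c]; ring
        _ = ∑ b, ∑ c, ∑ r, ∑ n, (x b * y c) * (h b r * h c n * S a r n) := swap4 _
        _ = 0 := by
            refine Finset.sum_eq_zero fun b _ => Finset.sum_eq_zero fun c _ => ?_
            have e : ∑ r, ∑ n, (x b * y c) * (h b r * h c n * S a r n)
                = (x b * y c) * ∑ r, ∑ n, h b r * h c n * S a r n := by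
              rw [Finset.mul_sum]
              exact Finset.sum_congr rfl fun r _ => by rw [Finset.mul_sum]
            rw [e, hh2', mul_zero]
    -- Step 5: special vectors and key decomposition
    set u : Fin 4 → Fin 4 → ℝ := fun a i => ∑ j, t j * S a i j with hudef
    set β : Fin 4 → ℝ := fun a => ∑ i, t i * u a i with hβdef
    set φ : Fin 4 → Fin 4 → ℝ := fun a i => -(u a i / τ - β a * t i / (2 * τ^2)) with hφdef
    set vs : Fin 4 → Fin 4 → ℝ := fun r i => τ * (if i = r then 1 else 0) - t r * t i with hvsdef
    have heval : ∀ (r : Fin 4) (g : Fin 4 → ℝ),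
        ∑ i, vs r i * g i = τ * g r - t r * ∑ i, t i * g i := by
      intro r g
      simp only [hvsdef, sub_mul]
      rw [Finset.sum_sub_distrib]
      congr 1
      · rw [Finset.sum_eq_single r]
        · simp
        · intro i _ hi; simp [hi]
        · intro hr; simp at hr
      · rw [Finset.mul_sum]
        exact Finset.sum_congr rfl fun i _ => by ring
    have hv0 : ∀ r : Fin 4, ∑ i, t i * vs r i = 0 := by
      intro r
      have e : ∑ i, t i * vs r i = ∑ i, vs r i * t i :=
        Finset.sum_congr rfl fun i _ => mul_comm _ _
      rw [e, heval r t, ← hτdef]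
      ring
    have hE : ∀ a r c,
        τ^2 * S a r c - τ * t c * u a r - τ * t r * u a c + t r * t c * β a = 0 := by
      intro a r c
      have hq := hQ a (vs r) (vs c) (hv0 r) (hv0 c)
      have einner : ∀ i, ∑ j, vs r i * vs c j * S a i j
          = vs r i * (τ * S a i c - t c * u a i) := by
        intro i
        have e0 : ∑ j, vs r i * vs c j * S a i j
            = ∑ j, vs c j * (vs r i * S a i j) :=
          Finset.sum_congr rfl fun j _ => by ring
        rw [e0, heval c (fun j => vs r i * S a i j)]
        have e1 : ∑ j, t j * (vs r i * S a i j) = vs r i * u a i := by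
          rw [hudef, Finset.mul_sum]
          exact Finset.sum_congr rfl fun j _ => by ring
        rw [e1]
        ring
      rw [Finset.sum_congr rfl (fun i _ => einner i),
        heval r (fun i => τ * S a i c - t c * u a i)] at hq
      have e2 : ∑ i, t i * (τ * S a i c - t c * u a i)
          = τ * u a c - t c * β a := by
        simp only [mul_sub, Finset.sum_sub_distrib]
        congr 1
        · have e3 : ∑ i, t i * (τ * S a i c) = τ * ∑ i, t i * S a c i := by
            rw [Finset.mul_sum]
            exact Finset.sum_congr rfl fun i _ => by rw [hSsymm a i c]; ring
          rw [e3, hudef]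
        · have e4 : ∑ i, t i * (t c * u a i) = t c * ∑ i, t i * u a i := by
            rw [Finset.mul_sum]
            exact Finset.sum_congr rfl fun i _ => by ring
          rw [e4, hβdef]
      rw [e2] at hq
      linear_combination hq
    have hkey : ∀ a r c, S a r c + t r * φ a c + t c * φ a r = 0 := by
      intro a r c
      have hmul : τ^2 * (S a r c + t r * φ a c + t c * φ a r) = 0 := by
        have expand : τ^2 * (S a r c + t r * -(u a c / τ - β a * t c / (2 * τ^2))
              + t c * -(u a r / τ - β a * t r / (2 * τ^2)))
            = τ^2 * S a r c - τ * t c * u a r - τ * t r * u a c + t r * t c * β a := by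
          field_simp
          ring
        rw [hφdef]
        rw [expand]
        linear_combination hE a r c
      exact (mul_eq_zero.mp hmul).resolve_left (pow_ne_zero 2 hτ)
    -- Step 6: define κ and conclude
    refine ⟨fun r b c => (σ b c r + t r * φ b c) / 2, ?_⟩
    intro a b c
    have hstep : ∀ r : Fin 4,
        (σ b c r + t r * φ b c) / 2 - (σ b r c + t c * φ b r) / 2
          = σ b c r + t r * φ b c := by
      intro r
      have h0 := hkey b r c
      have hS0 : S b r c = σ b c r + σ b r c := by rw [hSdef]
      rw [hS0] at h0
      linear_combination (-1/2 : ℝ) * h0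
    calc C a b c = ∑ r, h a r * σ b c r := (hσ b c a).symm
      _ = ∑ r, h a r * σ b c r + (∑ r, h a r * t r) * φ b c := by
          rw [horth a, zero_mul, add_zero]
      _ = ∑ r, h a r * (σ b c r + t r * φ b c) := by
          rw [Finset.sum_mul, ← Finset.sum_add_distrib]
          exact Finset.sum_congr rfl fun r _ => by ring
      _ = ∑ r, h a r * ((σ b c r + t r * φ b c) / 2 - (σ b r c + t c * φ b r) / 2) := by
          exact Finset.sum_congr rfl fun r _ => by rw [hstep r]
  · rintro ⟨κ, hκ⟩
    have key : ∀ f : Fin 4 → Fin 4 → ℝ, (∀ x y, f x y + f y x = 0) →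
        ∑ x, ∑ y, f x y = 0 := by
      intro f hf
      have h2 : (∑ x, ∑ y, f x y) + (∑ x, ∑ y, f x y)
          = ∑ x, ∑ y, (f x y + f y x) := by
        nth_rewrite 2 [Finset.sum_comm]
        rw [← Finset.sum_add_distrib]
        exact Finset.sum_congr rfl fun x _ => by rw [← Finset.sum_add_distrib]
      simp [hf] at h2
      linarith
    constructor
    · intro b c
      simp only [hκ, Finset.mul_sum]
      rw [Finset.sum_comm]
      apply Finset.sum_eq_zero
      intro r _
      have e : ∑ a, t a * (h a r * (κ r b c - κ c b r))
          = (∑ a, h r a * t a) * (κ r b c - κ c b r) := by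
        rw [Finset.sum_mul]
        exact Finset.sum_congr rfl fun a _ => by rw [hsym]; ring
      rw [e, horth r, zero_mul]
    · intro a b c
      simp only [hκ]
      have eA : ∑ n, (∑ r, h b r * (κ r a n - κ n a r)) * h n c
          = ∑ x, ∑ y, h b x * (κ x a y - κ y a x) * h y c := by
        simp only [Finset.sum_mul]; rw [Finset.sum_comm]
      have eB : ∑ n, (∑ r, h c r * (κ r a n - κ n a r)) * h b n
          = ∑ x, ∑ y, h c x * (κ x a y - κ y a x) * h b y := by
        simp only [Finset.sum_mul]; rw [Finset.sum_comm]
      rw [Finset.sum_add_distrib, eA, eB, ← Finset.sum_add_distrib]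
      have e1 : ∑ x, (∑ y, h b x * (κ x a y - κ y a x) * h y c
            + ∑ y, h c x * (κ x a y - κ y a x) * h b y)
          = ∑ x, ∑ y, (h b x * (κ x a y - κ y a x) * h y c
            + h c x * (κ x a y - κ y a x) * h b y) :=
        Finset.sum_congr rfl fun x _ => (Finset.sum_add_distrib).symm
      rw [e1]
      apply key
      intro x y
      linear_combination (κ x a y - κ y a x) * h b x * hsym y c
        + (κ x a y - κ y a x) * h b y * hsym c x
end

section
/- Let t : Fin 4 → ℝ be a temporal covector and h a spatial metric compatible with t. Let C : Fin 4 → Fin 4 → Fin 4 → ℝ (written C^a_{bc}) be a connecting field. Then C is metric-compatible (t_a C^a_{bc} = 0 and C^b_{an} h^{nc} + C^c_{an} h^{bn} = 0) and in addition satisfies h^{bm} h^{cn} (C^a_{mn} − C^a_{nm}) = 0 for all a,b,c (the condition that the spatial torsion difference vanishes, i.e. T^{abc} = T̃^{abc} = 0) if and only if there exist an array x : Fin 4 → Fin 4 → ℝ and an antisymmetric array y : Fin 4 → Fin 4 → ℝ (y_{rc} = −y_{cr}) such that C^a_{bc} = 2 h^{ar}(x_{rb} t_c + y_{rc} t_b)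 for all a,b,c. -/
lemma key_surj (t : Fin 4 → ℝ) (ht : t ≠ 0) (h : Fin 4 → Fin 4 → ℝ)
    (hsym : ∀ a b, h a b = h b a)
    (horth : ∀ a, ∑ b, h a b * t b = 0)
    (hrad : ∀ ω : Fin 4 → ℝ, (∀ b, ∑ a, ω a * h a b = 0) ↔ ∃ k : ℝ, ω = k • t) :
    ∀ v : Fin 4 → ℝ, (∑ a, t a * v a = 0) → ∃ w : Fin 4 → ℝ, ∀ a, ∑ r, h a r * w r = v a := by
  classical
  set M : Matrix (Fin 4) (Fin 4) ℝ := Matrix.of h with hM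
  set H : (Fin 4 → ℝ) →ₗ[ℝ] (Fin 4 → ℝ) := M.mulVecLin with hH
  have happ : ∀ w a, H w a = ∑ r, h a r * w r := by
    intro w a
    simp [hH, hM, Matrix.mulVecLin_apply, Matrix.mulVec, dotProduct]
  set f : (Fin 4 → ℝ) →ₗ[ℝ] ℝ := ∑ a : Fin 4, t a • LinearMap.proj a with hfdef
  have hf : ∀ v, f v = ∑ a, t a * v a := by
    intro v; simp [hfdef, LinearMap.sum_apply]
  have hker : LinearMap.ker H = Submodule.span ℝ {t} := by
    ext ω
    constructor
    · intro hw
      have hw' : ∀ a, ∑ r, h a r * ω r = 0 := by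
        intro a
        have := congrFun (LinearMap.mem_ker.mp hw) a
        rw [happ ω a] at this
        simpa using this
      have : ∀ b, ∑ a, ω a * h a b = 0 := by
        intro b
        rw [← hw' b]
        exact Finset.sum_congr rfl fun a _ => by rw [hsym b a]; ring
      obtain ⟨k, hk⟩ := (hrad ω).mp this
      rw [hk]
      exact Submodule.smul_mem _ k (Submodule.mem_span_singleton_self t)
    · intro hw
      obtain ⟨k, hk⟩ := Submodule.mem_span_singleton.mp hw
      rw [LinearMap.mem_ker]
      funext a
      rw [happ, ← hk]
      simp only [Pi.smul_apply, smul_eq_mul]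
      calc ∑ r, h a r * (k * t r) = k * ∑ r, h a r * t r := by
            rw [Finset.mul_sum]; exact Finset.sum_congr rfl fun r _ => by ring
        _ = 0 := by rw [horth a, mul_zero]
  have hle : LinearMap.range H ≤ LinearMap.ker f := by
    rintro v ⟨w, rfl⟩
    rw [LinearMap.mem_ker, hf]
    calc ∑ a, t a * H w a = ∑ a, ∑ r, t a * (h a r * w r) := by
          exact Finset.sum_congr rfl fun a _ => by rw [happ, Finset.mul_sum]
      _ = ∑ r, (∑ a, h r a * t a) * w r := by
          rw [Finset.sum_comm]
          exact Finset.sum_congr rfl fun r _ => by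
            rw [Finset.sum_mul]
            exact Finset.sum_congr rfl fun a _ => by rw [hsym r a]; ring
      _ = 0 := by
          simp [hsym, horth]
  obtain ⟨i, hi⟩ : ∃ i, t i ≠ 0 := by
    by_contra hc; push_neg at hc; exact ht (funext fun j => hc j)
  have hfne : Function.Surjective f := by
    intro r
    refine ⟨(r / t i) • (Pi.single i 1 : Fin 4 → ℝ), ?_⟩
    rw [map_smul, hf]
    simp [Pi.single_apply, Finset.sum_ite_eq', mul_comm]
    field_simp
  have hrange_f : LinearMap.range f = ⊤ := LinearMap.range_eq_top.mpr hfne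
  have hdim : Module.finrank ℝ (Fin 4 → ℝ) = 4 := by simp
  have hkerf : Module.finrank ℝ (LinearMap.ker f) = 3 := by
    have := LinearMap.finrank_range_add_finrank_ker f
    rw [hrange_f, hdim] at this
    simp at this
    omega
  have hrangeH : Module.finrank ℝ (LinearMap.range H) = 3 := by
    have := LinearMap.finrank_range_add_finrank_ker H
    rw [hker, hdim, finrank_span_singleton ht] at this
    omega
  have heq : LinearMap.range H = LinearMap.ker f :=
    Submodule.eq_of_le_of_finrank_eq hle (by rw [hrangeH, hkerf])
  intro v hv
  have : v ∈ LinearMap.ker f := by rw [LinearMap.mem_ker, hf]; exact hv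
  rw [← heq] at this
  obtain ⟨w, hw⟩ := this
  exact ⟨w, fun a => by rw [← happ, hw]⟩

/-- A connecting field `C^a_{bc}` is metric-compatible and has vanishing
spatial torsion difference `h^{bm} h^{cn} (C^a_{mn} − C^a_{nm}) = 0` iff
`C^a_{bc} = 2 h^{ar}(x_{rb} t_c + y_{rc} t_b)` for some `x` and antisymmetric `y`. -/
theorem connecting_field_compatible_spatial_torsion_free_iff
    (t : Fin 4 → ℝ) (ht : t ≠ 0)
    (h : Fin 4 → Fin 4 → ℝ)
    (hsym : ∀ a b, h a b = h b a)
    (hpsd : ∀ ω : Fin 4 → ℝ, 0 ≤ ∑ a, ∑ b, ω a * h a b * ω b)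
    (horth : ∀ a, ∑ b, h a b * t b = 0)
    (hrad : ∀ ω : Fin 4 → ℝ, (∀ b, ∑ a, ω a * h a b = 0) ↔ ∃ k : ℝ, ω = k • t)
    (C : Fin 4 → Fin 4 → Fin 4 → ℝ) :
    ((∀ b c, ∑ a, t a * C a b c = 0) ∧
      (∀ a b c, ∑ n, (C b a n * h n c + C c a n * h b n) = 0) ∧
      (∀ a b c, ∑ m, ∑ n, h b m * h c n * (C a m n - C a n m) = 0))
    ↔ ∃ x : Fin 4 → Fin 4 → ℝ, ∃ y : Fin 4 → Fin 4 → ℝ,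
        (∀ r c, y r c = - y c r) ∧
        (∀ a b c, C a b c = 2 * ∑ r, h a r * (x r b * t c + y r c * t b)) := by
  classical
  have hth : ∀ r, ∑ a, t a * h a r = 0 := by
    intro r
    rw [← horth r]
    exact Finset.sum_congr rfl fun a _ => by rw [hsym r a]; ring
  constructor
  · -- forward direction
    rintro ⟨H1, H2, H3⟩
    obtain ⟨i, hi⟩ : ∃ i, t i ≠ 0 := by
      by_contra hc; push_neg at hc; exact ht (funext fun j => hc j)
    set u : Fin 4 → ℝ := fun j => if j = i then (t i)⁻¹ else 0 with hudef
    have hu : ∑ a, t a * u a = 1 := by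
      simp [hudef, mul_ite, Finset.sum_ite_eq', mul_inv_cancel₀ hi]
    have surj := key_surj t ht h hsym horth hrad
    -- the kernel lemma (columns)
    have hkerlem : ∀ ω : Fin 4 → ℝ, (∀ b, ∑ m, h b m * ω m = 0) →
        ∃ k : ℝ, ∀ m, ω m = k * t m := by
      intro ω hw
      obtain ⟨k, hk⟩ := (hrad ω).mp (fun b => by
        rw [← hw b]; exact Finset.sum_congr rfl fun m _ => by rw [hsym b m]; ring)
      exact ⟨k, fun m => by rw [hk]; simp⟩
    -- the radical lemma (rows)
    have hradlem : ∀ ω : Fin 4 → ℝ, (∀ b, ∑ c, ω c * h c b = 0) →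
        ∃ k : ℝ, ∀ c, ω c = k * t c := by
      intro ω hw
      obtain ⟨k, hk⟩ := (hrad ω).mp hw
      exact ⟨k, fun m => by rw [hk]; simp⟩
    -- Step A : the double h-contraction of C on the lower indices vanishes
    have hS23 : ∀ a b c, (∑ m, ∑ n, h b m * h c n * C a m n)
        = ∑ m, ∑ n, h c m * h b n * C a m n := by
      intro a b c
      have h3 := H3 a b c
      simp only [mul_sub, Finset.sum_sub_distrib] at h3
      have e : (∑ m, ∑ n, h b m * h c n * C a n m) = ∑ m, ∑ n, h c m * h b n * C a m n := by
        rw [Finset.sum_comm]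
        exact Finset.sum_congr rfl fun m _ => Finset.sum_congr rfl fun n _ => by ring
      rw [e] at h3
      linarith
    have hA13 : ∀ a b c, (∑ m, ∑ n, h b m * h c n * C a m n)
        + (∑ m, ∑ n, h b m * h a n * C c m n) = 0 := by
      intro a b c
      have key : ∑ d, h b d * (∑ n, (C a d n * h n c + C c d n * h a n)) = 0 := by
        refine Finset.sum_eq_zero fun d _ => ?_
        rw [H2 d a c, mul_zero]
      have e : ∑ d, h b d * (∑ n, (C a d n * h n c + C c d n * h a n))
          = (∑ m, ∑ n, h b m * h c n * C a m n) + (∑ m, ∑ n, h b m * h a n * C c m n) := by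
        rw [← Finset.sum_add_distrib]
        refine Finset.sum_congr rfl fun m _ => ?_
        rw [Finset.mul_sum, ← Finset.sum_add_distrib]
        refine Finset.sum_congr rfl fun n _ => ?_
        rw [hsym n c]
        ring
      rw [e] at key
      exact key
    have hKK0 : ∀ a b c, (∑ m, ∑ n, h b m * h c n * C a m n) = 0 := by
      intro a b c
      linarith [hS23 a b c, hS23 b c a, hS23 c a b, hA13 a c b, hA13 b a c, hA13 c b a]
    -- Step B : the contraction with one h is proportional to t
    have c1' : ∀ a c m, ∑ n, h c n * C a m n
        = (∑ m', ∑ n, u m' * (h c n * C a m' n)) * t m := by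
      intro a c m
      obtain ⟨k, hk⟩ := hkerlem (fun m => ∑ n, h c n * C a m n) (by
        intro b
        calc ∑ m, h b m * ∑ n, h c n * C a m n
            = ∑ m, ∑ n, h b m * h c n * C a m n := by
              refine Finset.sum_congr rfl fun m _ => ?_
              rw [Finset.mul_sum]
              exact Finset.sum_congr rfl fun n _ => (mul_assoc _ _ _).symm
          _ = 0 := hKK0 a b c)
      have hkval : (∑ m', ∑ n, u m' * (h c n * C a m' n)) = k := by
        calc ∑ m', ∑ n, u m' * (h c n * C a m' n)
            = ∑ m', u m' * (k * t m') := by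
              refine Finset.sum_congr rfl fun m' _ => ?_
              rw [← Finset.mul_sum, hk m']
          _ = k * ∑ m', t m' * u m' := by
              rw [Finset.mul_sum]; exact Finset.sum_congr rfl fun m' _ => by ring
          _ = k := by rw [hu, mul_one]
      rw [hkval]
      exact hk m
    -- Step C : decomposition C a b c = A a b * t c + B a c * t b
    have c2 : ∀ a m, ∃ k : ℝ, ∀ n,
        C a m n - t m * (∑ m', u m' * C a m' n) = k * t n := by
      intro a m
      apply hkerlem
      intro cc
      calc ∑ n, h cc n * (C a m n - t m * (∑ m', u m' * C a m' n))
          = (∑ n, h cc n * C a m n) - t m * (∑ n, ∑ m', u m' * (h cc n * C a m' n)) := by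
            simp only [mul_sub, Finset.sum_sub_distrib]
            congr 1
            simp only [Finset.mul_sum]
            exact Finset.sum_congr rfl fun n _ => Finset.sum_congr rfl fun m' _ => by ring
        _ = 0 := by
            rw [c1' a cc m]
            have e : (∑ n, ∑ m', u m' * (h cc n * C a m' n))
                = ∑ m', ∑ n, u m' * (h cc n * C a m' n) := Finset.sum_comm
            rw [e]; ring
    obtain ⟨A, B, hdecomp, htA, htB⟩ :
        ∃ A B : Fin 4 → Fin 4 → ℝ,
          (∀ a b c, C a b c = A a b * t c + B a c * t b) ∧
          (∀ b, ∑ a, t a * A a b = 0) ∧ (∀ c, ∑ a, t a * B a c = 0) := by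
      have hz : ∀ q, ∑ a, t a * (∑ m', u m' * C a m' q) = 0 := by
        intro q
        calc ∑ a, t a * (∑ m', u m' * C a m' q)
            = ∑ m', u m' * (∑ a, t a * C a m' q) := by
              simp only [Finset.mul_sum]
              rw [Finset.sum_comm]
              exact Finset.sum_congr rfl fun m' _ => Finset.sum_congr rfl fun a _ => by ring
          _ = 0 := by simp only [H1, mul_zero, Finset.sum_const_zero]
      have hz2 : ∀ b, ∑ a, t a * (∑ n, u n * C a b n) = 0 := by
        intro b
        calc ∑ a, t a * (∑ n, u n * C a b n)
            = ∑ n, u n * (∑ a, t a * C a b n) := by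
              simp only [Finset.mul_sum]
              rw [Finset.sum_comm]
              exact Finset.sum_congr rfl fun n _ => Finset.sum_congr rfl fun a _ => by ring
          _ = 0 := by simp only [H1, mul_zero, Finset.sum_const_zero]
      have hz3 : ∑ a, t a * (∑ n, u n * (∑ m', u m' * C a m' n)) = 0 := by
        calc ∑ a, t a * (∑ n, u n * (∑ m', u m' * C a m' n))
            = ∑ n, u n * (∑ a, t a * (∑ m', u m' * C a m' n)) := by
              simp only [Finset.mul_sum]
              rw [Finset.sum_comm]
              exact Finset.sum_congr rfl fun n _ => Finset.sum_congr rfl fun a _ =>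
                Finset.sum_congr rfl fun m' _ => by ring
          _ = 0 := by simp only [hz, mul_zero, Finset.sum_const_zero]
      refine ⟨fun a b => (∑ n, u n * C a b n) - (∑ n, u n * (∑ m', u m' * C a m' n)) * t b,
        fun a c => ∑ m', u m' * C a m' c, ?_, ?_, ?_⟩
      · intro a b c
        obtain ⟨k, hk⟩ := c2 a b
        have hkval : k = (∑ n, u n * C a b n)
            - (∑ n, u n * (∑ m', u m' * C a m' n)) * t b := by
          calc k = k * (∑ n, t n * u n) := by
                have : (∑ n, t n * u n) = 1 := hu
                rw [this, mul_one]
            _ = ∑ n, u n * (k * t n) := by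
                rw [Finset.mul_sum]; exact Finset.sum_congr rfl fun n _ => by ring
            _ = ∑ n, u n * (C a b n - t b * (∑ m', u m' * C a m' n)) := by
                exact Finset.sum_congr rfl fun n _ => by rw [← hk n]
            _ = (∑ n, u n * C a b n)
                - (∑ n, u n * (∑ m', u m' * C a m' n)) * t b := by
                simp only [mul_sub, Finset.sum_sub_distrib]
                congr 1
                rw [Finset.sum_mul]
                exact Finset.sum_congr rfl fun n _ => by ring
        have hc := hk c
        rw [hkval] at hc
        simp only
        linarith [hc]
      · intro b
        simp only
        calc ∑ a, t a * ((∑ n, u n * C a b n)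
              - (∑ n, u n * (∑ m', u m' * C a m' n)) * t b)
            = (∑ a, t a * (∑ n, u n * C a b n))
              - (∑ a, t a * (∑ n, u n * (∑ m', u m' * C a m' n))) * t b := by
              simp only [mul_sub, Finset.sum_sub_distrib]
              congr 1
              rw [Finset.sum_mul]
              exact Finset.sum_congr rfl fun a _ => by ring
          _ = 0 := by rw [hz2 b, hz3, zero_mul, sub_zero]
      · intro c
        simp only
        exact hz c
    -- antisymmetry of B h
    have hBh : ∀ b c, (∑ n, B b n * h n c) + (∑ n, B c n * h n b) = 0 := by
      intro b c
      have e : ∀ (p q w : Fin 4), ∑ n, C p q n * h n w = t q * ∑ n, B p n * h n w := by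
        intro p q w
        calc ∑ n, C p q n * h n w
            = ∑ n, (A p q * (h w n * t n) + t q * (B p n * h n w)) := by
              refine Finset.sum_congr rfl fun n _ => ?_
              rw [hdecomp p q n, hsym w n]; ring
          _ = A p q * (∑ n, h w n * t n) + t q * ∑ n, B p n * h n w := by
              rw [Finset.sum_add_distrib, ← Finset.mul_sum, ← Finset.mul_sum]
          _ = t q * ∑ n, B p n * h n w := by rw [horth w, mul_zero, zero_add]
      have e' : ∀ (p q w : Fin 4), ∑ n, C p q n * h w n = t q * ∑ n, B p n * h n w := by
        intro p q w
        rw [← e p q w]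
        exact Finset.sum_congr rfl fun n _ => by rw [hsym w n]
      have h2 := H2 i b c
      rw [Finset.sum_add_distrib, e b i c, e' c i b, ← mul_add] at h2
      exact (mul_eq_zero.mp h2).resolve_left hi
    -- construct x
    have hxex : ∀ b, ∃ w : Fin 4 → ℝ, ∀ a, ∑ r, h a r * w r = A a b / 2 := by
      intro b
      apply surj
      calc ∑ a, t a * (A a b / 2) = (∑ a, t a * A a b) / 2 := by
            rw [Finset.sum_div]; exact Finset.sum_congr rfl fun a _ => by ring
        _ = 0 := by rw [htA b, zero_div]
    choose X hX using hxex
    -- construct z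
    have hzex : ∀ c, ∃ w : Fin 4 → ℝ, ∀ a, ∑ r, h a r * w r = B a c / 2 := by
      intro c
      apply surj
      calc ∑ a, t a * (B a c / 2) = (∑ a, t a * B a c) / 2 := by
            rw [Finset.sum_div]; exact Finset.sum_congr rfl fun a _ => by ring
        _ = 0 := by rw [htB c, zero_div]
    choose Z hZ using hzex
    -- the symmetric part, contracted with h, is proportional to t
    have hrho : ∀ a, ∃ ρ : ℝ, ∀ c, ∑ r, h a r * (Z c r + Z r c) = ρ * t c := by
      intro a
      apply hradlem
      intro b
      have step1 : ∀ c, (∑ r, h a r * (Z c r + Z r c)) * h c b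
          = B a c / 2 * h c b + ∑ r, h a r * Z r c * h c b := by
        intro c
        have e1 : (∑ r, h a r * (Z c r + Z r c))
            = (∑ r, h a r * Z c r) + ∑ r, h a r * Z r c := by
          simp only [mul_add, Finset.sum_add_distrib]
        rw [e1, hZ c a, add_mul, Finset.sum_mul]
      have step2 : ∀ r, ∑ c, h a r * Z r c * h c b = h a r * (B b r / 2) := by
        intro r
        calc ∑ c, h a r * Z r c * h c b = ∑ c, h a r * (h b c * Z r c) := by
              refine Finset.sum_congr rfl fun c _ => by rw [hsym c b]; ring
          _ = h a r * ∑ c, h b c * Z r c := by rw [← Finset.mul_sum]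
          _ = h a r * (B b r / 2) := by rw [hZ r b]
      calc ∑ c, (∑ r, h a r * (Z c r + Z r c)) * h c b
          = ∑ c, (B a c / 2 * h c b + ∑ r, h a r * Z r c * h c b) :=
            Finset.sum_congr rfl fun c _ => step1 c
        _ = (∑ c, B a c / 2 * h c b) + ∑ r, ∑ c, h a r * Z r c * h c b := by
            rw [Finset.sum_add_distrib, Finset.sum_comm]
        _ = (∑ c, B a c * h c b) / 2 + ∑ r, B b r * h r a / 2 := by
            congr 1
            · rw [Finset.sum_div]; exact Finset.sum_congr rfl fun c _ => by ring
            · refine Finset.sum_congr rfl fun r _ => ?_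
              rw [step2 r, hsym a r]; ring
        _ = (∑ c, B a c * h c b) / 2 + (∑ r, B b r * h r a) / 2 := by rw [← Finset.sum_div]
        _ = 0 := by linarith [hBh a b]
    choose ρ hρ using hrho
    have htrho : ∑ a, t a * ρ a = 0 := by
      have e : (∑ a, t a * ρ a) * t i = 0 := by
        calc (∑ a, t a * ρ a) * t i
            = ∑ a, t a * (∑ r, h a r * (Z i r + Z r i)) := by
              rw [Finset.sum_mul]
              refine Finset.sum_congr rfl fun a _ => ?_
              rw [hρ a i]; ring
          _ = ∑ r, (∑ a, t a * h a r) * (Z i r + Z r i) := by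
              simp only [Finset.mul_sum, Finset.sum_mul]
              rw [Finset.sum_comm]
              exact Finset.sum_congr rfl fun r _ => Finset.sum_congr rfl fun a _ => by ring
          _ = 0 := by simp [hth]
      rcases mul_eq_zero.mp e with h0 | h0
      · exact h0
      · exact absurd h0 hi
    obtain ⟨lam, hlam⟩ : ∃ lam : Fin 4 → ℝ, ∀ a, ∑ r, h a r * lam r = -ρ a := by
      apply surj
      have e : ∑ a, t a * -ρ a = -∑ a, t a * ρ a := by
        rw [← Finset.sum_neg_distrib]
        exact Finset.sum_congr rfl fun a _ => by ring
      rw [e, htrho, neg_zero]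
    -- assemble
    refine ⟨fun r b => X b r,
      fun r c => (Z c r - Z r c) / 2 + (t r * lam c - t c * lam r) / 2, ?_, ?_⟩
    · intro r c; ring
    · intro a b c
      show C a b c = 2 * ∑ r, h a r *
        (X b r * t c + ((Z c r - Z r c) / 2 + (t r * lam c - t c * lam r) / 2) * t b)
      have p1 : ∑ r, h a r * Z c r = B a c / 2 := hZ c a
      have p2 : ∑ r, h a r * Z r c = ρ a * t c - B a c / 2 := by
        have hr := hρ a c
        have expand : ∑ r, h a r * (Z c r + Z r c)
            = (∑ r, h a r * Z c r) + ∑ r, h a r * Z r c := by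
          simp only [mul_add, Finset.sum_add_distrib]
        rw [expand, p1] at hr
        linarith
      have hYB : ∑ r, h a r * ((Z c r - Z r c) / 2 + (t r * lam c - t c * lam r) / 2)
          = B a c / 2 := by
        have e : ∀ r, h a r * ((Z c r - Z r c) / 2 + (t r * lam c - t c * lam r) / 2)
            = (h a r * Z c r - h a r * Z r c + (h a r * t r * lam c - h a r * lam r * t c)) / 2 := by
          intro r; ring
        calc ∑ r, h a r * ((Z c r - Z r c) / 2 + (t r * lam c - t c * lam r) / 2)
            = ((∑ r, h a r * Z c r) - (∑ r, h a r * Z r c)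
              + ((∑ r, h a r * t r) * lam c - (∑ r, h a r * lam r) * t c)) / 2 := by
              simp only [e]
              rw [← Finset.sum_div]
              congr 1
              simp only [Finset.sum_sub_distrib, Finset.sum_add_distrib, Finset.sum_mul]
          _ = B a c / 2 := by rw [p1, p2, horth a, hlam a]; ring
      calc C a b c = A a b * t c + B a c * t b := hdecomp a b c
        _ = 2 * ((∑ r, h a r * X b r) * t c
            + (∑ r, h a r * ((Z c r - Z r c) / 2 + (t r * lam c - t c * lam r) / 2)) * t b) := by
            rw [hX b a, hYB]; ring
        _ = 2 * ∑ r, (h a r * X b r * t c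
            + h a r * ((Z c r - Z r c) / 2 + (t r * lam c - t c * lam r) / 2) * t b) := by
            rw [Finset.sum_mul, Finset.sum_mul, ← Finset.sum_add_distrib]
        _ = 2 * ∑ r, h a r * (X b r * t c
            + ((Z c r - Z r c) / 2 + (t r * lam c - t c * lam r) / 2) * t b) := by
            congr 1
            exact Finset.sum_congr rfl fun r _ => by ring
  · -- easy direction
    rintro ⟨x, y, hy, hC⟩
    have hC2 : ∀ a b c, C a b c
        = (2 * ∑ r, h a r * x r b) * t c + (2 * ∑ r, h a r * y r c) * t b := by
      intro a b c
      rw [hC]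
      simp only [Finset.mul_sum, Finset.sum_mul, mul_add, add_mul, Finset.sum_add_distrib,
        mul_comm, mul_assoc, mul_left_comm]
    refine ⟨?_, ?_, ?_⟩
    · intro b c
      calc ∑ a, t a * C a b c
          = ∑ a, ∑ r, t a * h a r * (2 * (x r b * t c + y r c * t b)) := by
            refine Finset.sum_congr rfl fun a _ => ?_
            rw [hC, Finset.mul_sum, Finset.mul_sum]
            exact Finset.sum_congr rfl fun r _ => by ring
        _ = ∑ r, (∑ a, t a * h a r) * (2 * (x r b * t c + y r c * t b)) := by
            rw [Finset.sum_comm]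
            exact Finset.sum_congr rfl fun r _ => by rw [Finset.sum_mul]
        _ = 0 := by simp [hth]
    · intro a b c
      have e1 : ∀ (p q w : Fin 4), ∑ n, C p q n * h n w
          = t q * ∑ r, ∑ n, 2 * (h p r * y r n * h n w) := by
        intro p q w
        calc ∑ n, C p q n * h n w
            = ∑ n, ∑ r, 2 * (h p r * (x r q * t n + y r n * t q)) * h n w := by
              refine Finset.sum_congr rfl fun n _ => ?_
              rw [hC, Finset.mul_sum, Finset.sum_mul]
          _ = ∑ r, ∑ n, 2 * (h p r * (x r q * t n + y r n * t q)) * h n w := Finset.sum_comm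
          _ = ∑ r, (∑ n, (2 * (h p r * x r q)) * (h w n * t n)
              + ∑ n, t q * (2 * (h p r * y r n * h n w))) := by
              refine Finset.sum_congr rfl fun r _ => ?_
              rw [← Finset.sum_add_distrib]
              refine Finset.sum_congr rfl fun n _ => ?_
              rw [hsym w n]; ring
          _ = ∑ r, ((2 * (h p r * x r q)) * ∑ n, h w n * t n
              + t q * ∑ n, 2 * (h p r * y r n * h n w)) := by
              refine Finset.sum_congr rfl fun r _ => ?_
              rw [← Finset.mul_sum, ← Finset.mul_sum]
          _ = ∑ r, t q * ∑ n, 2 * (h p r * y r n * h n w) := by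
              simp only [horth, mul_zero, zero_add]
          _ = t q * ∑ r, ∑ n, 2 * (h p r * y r n * h n w) := by rw [← Finset.mul_sum]
      have hW : (∑ r, ∑ n, 2 * (h b r * y r n * h n c))
          + (∑ r, ∑ n, 2 * (h c r * y r n * h n b)) = 0 := by
        rw [Finset.sum_comm (f := fun r n => 2 * (h b r * y r n * h n c))]
        rw [← Finset.sum_add_distrib]
        refine Finset.sum_eq_zero fun α _ => ?_
        rw [← Finset.sum_add_distrib]
        refine Finset.sum_eq_zero fun β _ => ?_
        rw [hy α β, hsym c α, hsym β b]
        ring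
      have e1' : ∀ (p q w : Fin 4), ∑ n, C p q n * h w n
          = t q * ∑ r, ∑ n, 2 * (h p r * y r n * h n w) := by
        intro p q w
        rw [← e1 p q w]
        exact Finset.sum_congr rfl fun n _ => by rw [hsym w n]
      rw [Finset.sum_add_distrib, e1 b a c, e1' c a b, ← mul_add, hW, mul_zero]
    · intro a b c
      calc ∑ m, ∑ n, h b m * h c n * (C a m n - C a n m)
          = ∑ m, (∑ n, (h b m * ((2 * ∑ r, h a r * x r m) - (2 * ∑ r, h a r * y r m)))
              * (h c n * t n)
            + ∑ n, (h b m * t m)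
              * (h c n * ((2 * ∑ r, h a r * y r n) - (2 * ∑ r, h a r * x r n)))) := by
            refine Finset.sum_congr rfl fun m _ => ?_
            rw [← Finset.sum_add_distrib]
            refine Finset.sum_congr rfl fun n _ => ?_
            rw [hC2 a m n, hC2 a n m]
            ring
        _ = ∑ m, ((h b m * ((2 * ∑ r, h a r * x r m) - (2 * ∑ r, h a r * y r m)))
              * ∑ n, h c n * t n
            + (h b m * t m)
              * ∑ n, h c n * ((2 * ∑ r, h a r * y r n) - (2 * ∑ r, h a r * x r n))) := by
            refine Finset.sum_congr rfl fun m _ => ?_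
            rw [← Finset.mul_sum, ← Finset.mul_sum]
        _ = ∑ m, (h b m * t m)
              * ∑ n, h c n * ((2 * ∑ r, h a r * y r n) - (2 * ∑ r, h a r * x r n)) := by
            simp only [horth, mul_zero, zero_add]
        _ = (∑ m, h b m * t m)
              * ∑ n, h c n * ((2 * ∑ r, h a r * y r n) - (2 * ∑ r, h a r * x r n)) := by
            rw [Finset.sum_mul]
        _ = 0 := by rw [horth b, zero_mul]
end

section
/- Let Γ be a connection on an open set U ⊆ ℝ⁴ with torsion T^c_{ab} = Γ^c_{ba} − Γ^c_{ab}, and let t : U → (Fin 4 → ℝ) be a differentiable covector field compatible with Γ, i.e. ∂_a t_b − Γ^n_{ab} t_n = 0 on U. Then (i) ∂_a t_b − ∂_b t_a = −T^n_{ab} t_n at every point of U; hence t is closed if and only if T^n_{ab} t_n = 0 for all a,b. (ii) In particular, if the torsion has the spacelike form T^a_{bc} = F^a_b t_c − F^a_c t_b for some field F^a_b satisfying t_a F^a_b = 0, then compatibility ∇_a t_b = 0 implies t is closed. Thus a connection with nonvanishing torsion can be compatible with a closed temporal metric. -/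
/-- The coordinate partial derivative on ℝ⁴ in the `i`-th direction. -/
noncomputable def pd (i : Fin 4) (f : (Fin 4 → ℝ) → ℝ) (p : Fin 4 → ℝ) : ℝ :=
  fderiv ℝ f p (Pi.single i 1)

/-- if a connection `Γ` with torsion `T^c_{ab} = Γ^c_{ba} − Γ^c_{ab}` is
compatible with a differentiable covector field `t` on `U`, then
(i) `∂_a t_b − ∂_b t_a = −T^n_{ab} t_n`, hence `t` is closed iff `T^n_{ab} t_n = 0`;
(ii) if the torsion has the spacelike form `T^a_{bc} = F^a_b t_c − F^a_c t_b` with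
`t_a F^a_b = 0`, then `t` is closed. -/
theorem compatible_covector_with_torsion
    (U : Set (Fin 4 → ℝ)) (hU : IsOpen U)
    (Γ : (Fin 4 → ℝ) → Fin 4 → Fin 4 → Fin 4 → ℝ)
    (t : (Fin 4 → ℝ) → Fin 4 → ℝ)
    (ht : ∀ b, DifferentiableOn ℝ (fun p => t p b) U)
    (hcompat : ∀ p ∈ U, ∀ a b,
      pd a (fun q => t q b) p - ∑ n, Γ p n a b * t p n = 0) :
    (∀ p ∈ U, ∀ a b,
        pd a (fun q => t q b) p - pd b (fun q => t q a) p
          = -∑ n, (Γ p n b a - Γ p n a b) * t p n)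
    ∧ (∀ p ∈ U,
        ((∀ a b, pd a (fun q => t q b) p - pd b (fun q => t q a) p = 0)
          ↔ (∀ a b, ∑ n, (Γ p n b a - Γ p n a b) * t p n = 0)))
    ∧ (∀ F : (Fin 4 → ℝ) → Fin 4 → Fin 4 → ℝ,
        (∀ p ∈ U, ∀ a b c,
          Γ p a c b - Γ p a b c = F p a b * t p c - F p a c * t p b) →
        (∀ p ∈ U, ∀ b, ∑ a, t p a * F p a b = 0) →
        ∀ p ∈ U, ∀ a b,
          pd a (fun q => t q b) p - pd b (fun q => t q a) p = 0) := by
  have key : ∀ p ∈ U, ∀ a b,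
      pd a (fun q => t q b) p - pd b (fun q => t q a) p
        = -∑ n, (Γ p n b a - Γ p n a b) * t p n := by
    intro p hp a b
    have h1 := hcompat p hp a b
    have h2 := hcompat p hp b a
    have e1 : pd a (fun q => t q b) p = ∑ n, Γ p n a b * t p n := by linarith
    have e2 : pd b (fun q => t q a) p = ∑ n, Γ p n b a * t p n := by linarith
    rw [e1, e2, ← Finset.sum_sub_distrib, ← Finset.sum_neg_distrib]
    apply Finset.sum_congr rfl
    intro n _
    ring
  refine ⟨key, fun p hp => ?_, ?_⟩
  · constructor
    · intro h a b
      have := key p hp a b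
      rw [h a b] at this
      linarith
    · intro h a b
      rw [key p hp a b, h a b, neg_zero]
  · intro F hF hFt p hp a b
    rw [key p hp a b, neg_eq_zero]
    have : ∀ n, Γ p n b a - Γ p n a b = F p n a * t p b - F p n b * t p a :=
      fun n => hF p hp n a b
    calc ∑ n, (Γ p n b a - Γ p n a b) * t p n
        = ∑ n, (F p n a * t p b - F p n b * t p a) * t p n := by
          exact Finset.sum_congr rfl fun n _ => by rw [this n]
      _ = t p b * ∑ n, t p n * F p n a - t p a * ∑ n, t p n * F p n b := by
          rw [Finset.mul_sum, Finset.mul_sum, ← Finset.sum_sub_distrib]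
          exact Finset.sum_congr rfl fun n _ => by ring
      _ = 0 := by rw [hFt p hp a, hFt p hp b]; ring
end

section
/- Let t ∈ (ℝ⁴)* be a constant covector, x ∈ ℝ⁴ a constant vector with t_a x^a = 0, and ψ : U → ℝ a twice continuously differentiable function on an open set U ⊆ ℝ⁴. Define the connection on U with Christoffel symbols Γ^a_{bc} = −x^a (∂_b ψ) t_c (i.e. ∇ = (∂, C) with connecting field C^a_{bc} = x^a (∂_b ψ) t_c relative to the flat coordinate connection). Then the Riemann curvature tensor of this connection vanishes identically on U: R^a_{bcd} = ∂_d Γ^a_{cb} − ∂_c Γ^a_{db} + Γ^a_{dm} Γ^m_{cb} − Γ^a_{cm} Γ^m_{db} = 0 for all indices at every point of U. That is, the connection is flat despite having (in general) nonvanishing torsion. -/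
lemma pd_const_mul (e : Fin 4) (k : ℝ) (g : (Fin 4 → ℝ) → ℝ) (p : Fin 4 → ℝ)
    (h : DifferentiableAt ℝ g p) :
    pd e (fun q => k * g q) p = k * pd e g p := by
  unfold pd
  rw [fderiv_const_mul h]
  simp

lemma pd_pd (ψ : (Fin 4 → ℝ) → ℝ) (p : Fin 4 → ℝ)
    (h1 : DifferentiableAt ℝ (fderiv ℝ ψ) p) (c d : Fin 4) :
    pd d (fun q => pd c ψ q) p
      = fderiv ℝ (fderiv ℝ ψ) p (Pi.single d 1) (Pi.single c 1) := by
  unfold pd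
  rw [fderiv_clm_apply h1 (differentiableAt_const _)]
  simp

/-- the connection with Christoffel symbols `Γ^a_{bc} = −x^a (∂_b ψ) t_c`,
for a constant covector `t`, a constant vector `x` with `t_a x^a = 0`, and a C² scalar
field `ψ`, is flat: its Riemann tensor vanishes identically on `U`. -/
theorem torsional_connection_is_flat
    (U : Set (Fin 4 → ℝ)) (hU : IsOpen U)
    (t : Fin 4 → ℝ) (x : Fin 4 → ℝ)
    (htx : ∑ a, t a * x a = 0)
    (ψ : (Fin 4 → ℝ) → ℝ) (hψ : ContDiffOn ℝ 2 ψ U)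
    (Γ : (Fin 4 → ℝ) → Fin 4 → Fin 4 → Fin 4 → ℝ)
    (hΓ : ∀ p a b c, Γ p a b c = -(x a * pd b ψ p * t c)) :
    ∀ p ∈ U, ∀ a b c d,
      pd d (fun q => Γ q a c b) p - pd c (fun q => Γ q a d b) p
        + ∑ m, (Γ p a d m * Γ p m c b - Γ p a c m * Γ p m d b) = 0 := by
  intro p hp a b c d
  have hp2 : ContDiffAt ℝ 2 ψ p := hψ.contDiffAt (hU.mem_nhds hp)
  have h1 : DifferentiableAt ℝ (fderiv ℝ ψ) p := by
    have := hp2.fderiv_right (m := 1) (by norm_num)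
    exact this.differentiableAt (by norm_num)
  have hsym : IsSymmSndFDerivAt ℝ ψ p := hp2.isSymmSndFDerivAt (by norm_num)
  have hdc : ∀ e : Fin 4, DifferentiableAt ℝ (fun q => pd e ψ q) p := by
    intro e
    exact h1.clm_apply (differentiableAt_const _)
  have key : ∀ e f : Fin 4, pd e (fun q => Γ q a f b) p
      = -(x a * t b) * fderiv ℝ (fderiv ℝ ψ) p (Pi.single e 1) (Pi.single f 1) := by
    intro e f
    have : (fun q => Γ q a f b) = fun q => -(x a * t b) * pd f ψ q := by
      funext q; rw [hΓ]; ring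
    rw [this, pd_const_mul _ _ _ _ (hdc f), pd_pd ψ p h1 f e]
  rw [key d c, key c d, hsym.eq (Pi.single d 1) (Pi.single c 1)]
  have hsum : ∑ m, (Γ p a d m * Γ p m c b - Γ p a c m * Γ p m d b) = 0 := by
    have : ∑ m, (Γ p a d m * Γ p m c b - Γ p a c m * Γ p m d b)
        = (x a * pd d ψ p * pd c ψ p * t b - x a * pd c ψ p * pd d ψ p * t b)
          * ∑ m, t m * x m := by
      rw [Finset.mul_sum]
      apply Finset.sum_congr rfl
      intro m _
      rw [hΓ, hΓ, hΓ, hΓ]; ring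
    rw [this, htx, mul_zero]
  rw [hsum]
  ring
end

section
/- Let t ∈ (ℝ⁴)* be a constant covector, x ∈ ℝ⁴ a constant vector with t_a x^a = 0, and ψ : U → ℝ twice continuously differentiable on an open set U ⊆ ℝ⁴ with x^a ∂_a ψ = 0 on U. Let F̂^a_b = x^a ∂_b ψ and let ∇̌ be the connection with Christoffel symbols Γ̌^a_{bc} = −x^a (∂_b ψ) t_c. Then the force field F̂ contributes nothing to the field equation: δ^n_a ∇̌_{[n} F̂^a_{b]} = 0 at every point of U, i.e. (1/2) δ^n_a (∇̌_n F̂^a_b − ∇̌_b F̂^a_n) = 0, where ∇̌_n F̂^a_b = ∂_n F̂^a_b + Γ̌^a_{nm} F̂^m_b − Γ̌^m_{nb} F̂^a_m. -/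
/-- with `F̂^a_b = x^a ∂_b ψ` and `Γ̌^a_{bc} = −x^a (∂_b ψ) t_c`, where
`t_a x^a = 0` and `x^a ∂_a ψ = 0` on `U`, the force field `F̂` contributes nothing to the
field equation: `δ^n_a ∇̌_{[n} F̂^a_{b]} = 0` on `U`. -/
theorem torsional_piece_contributes_nothing_to_field_equation
    (U : Set (Fin 4 → ℝ)) (hU : IsOpen U)
    (t : Fin 4 → ℝ) (x : Fin 4 → ℝ)
    (htx : ∑ a, t a * x a = 0)
    (ψ : (Fin 4 → ℝ) → ℝ) (hψ : ContDiffOn ℝ 2 ψ U)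
    (hxψ : ∀ p ∈ U, ∑ a, x a * pd a ψ p = 0)
    (F : (Fin 4 → ℝ) → Fin 4 → Fin 4 → ℝ)
    (hF : ∀ p a b, F p a b = x a * pd b ψ p)
    (Γ : (Fin 4 → ℝ) → Fin 4 → Fin 4 → Fin 4 → ℝ)
    (hΓ : ∀ p a b c, Γ p a b c = -(x a * pd b ψ p * t c))
    (D : (Fin 4 → ℝ) → Fin 4 → Fin 4 → Fin 4 → ℝ)
    (hD : ∀ p n a b, D p n a b =
      pd n (fun q => F q a b) p + ∑ m, Γ p a n m * F p m b
        - ∑ m, Γ p m n b * F p a m) :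
    ∀ p ∈ U, ∀ b,
      (1 / 2) * ((∑ n, D p n n b) - (∑ n, D p b n n)) = 0 := by
  intro p hp b
  have hmem : U ∈ nhds p := hU.mem_nhds hp
  have hψp : ContDiffAt ℝ 2 ψ p := hψ.contDiffAt hmem
  have hψ0 : ∑ a, x a * pd a ψ p = 0 := hxψ p hp
  -- differentiability of fderiv ψ near p
  have hfd : ∀ᶠ q in nhds p, DifferentiableAt ℝ (fderiv ℝ ψ) q := by
    obtain ⟨V, hV, hVU, hVo⟩ : ∃ V, p ∈ V ∧ V ⊆ U ∧ IsOpen V := by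
      rcases mem_nhds_iff.1 hmem with ⟨V, hVU, hVo, hpV⟩
      exact ⟨V, hpV, hVU, hVo⟩
    filter_upwards [hVo.mem_nhds hV] with q hq
    have : ContDiffAt ℝ 2 ψ q := hψ.contDiffAt (hU.mem_nhds (hVU hq))
    exact ((this.fderiv_right (m := 1) le_rfl).differentiableAt one_ne_zero)
  have hfdp : DifferentiableAt ℝ (fderiv ℝ ψ) p := hfd.self_of_nhds
  have hdi : ∀ i, DifferentiableAt ℝ (fun q => pd i ψ q) p := fun i =>
    hfdp.clm_apply (differentiableAt_const _)
  -- second partials equal second fderiv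
  have key : ∀ i j, pd i (fun q => pd j ψ q) p
      = fderiv ℝ (fderiv ℝ ψ) p (Pi.single i 1) (Pi.single j 1) := by
    intro i j
    show fderiv ℝ (fun q => (fderiv ℝ ψ q) (Pi.single j 1)) p (Pi.single i 1) = _
    rw [fderiv_clm_apply hfdp (differentiableAt_const _)]
    simp
  have hsym : IsSymmSndFDerivAt ℝ ψ p := hψp.isSymmSndFDerivAt (by simp [minSmoothness_of_isRCLikeNormedField])
  -- the contracted second derivative vanishes
  have hz : ∀ c : Fin 4, ∑ n, x n * fderiv ℝ (fderiv ℝ ψ) p (Pi.single c 1) (Pi.single n 1)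
      = 0 := by
    intro c
    have hdsum : fderiv ℝ (fun q => ∑ n, x n * pd n ψ q) p = 0 := by
      have heq : (fun q => ∑ n : Fin 4, x n * pd n ψ q) =ᶠ[nhds p] fun _ => (0 : ℝ) := by
        filter_upwards [hmem] with q hq using hxψ q hq
      rw [heq.fderiv_eq]; exact fderiv_const_apply 0
    have : fderiv ℝ (fun q => ∑ n : Fin 4, x n * pd n ψ q) p (Pi.single c 1)
        = ∑ n, x n * fderiv ℝ (fderiv ℝ ψ) p (Pi.single c 1) (Pi.single n 1) := by
      rw [fderiv_fun_sum (fun n _ => (hdi n).const_mul (x n))]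
      rw [ContinuousLinearMap.sum_apply]
      refine Finset.sum_congr rfl fun n _ => ?_
      rw [fderiv_const_mul (hdi n)]
      have := key c n
      simp only [ContinuousLinearMap.smul_apply, smul_eq_mul]
      rw [← this]
      rfl
    rw [← this, hdsum]; rfl
  -- first derivative terms
  have hA : ∑ n, pd n (fun q => F q n b) p = 0 := by
    have : ∀ n : Fin 4, pd n (fun q => F q n b) p
        = x n * fderiv ℝ (fderiv ℝ ψ) p (Pi.single n 1) (Pi.single b 1) := by
      intro n
      have h1 : (fun q => F q n b) = fun q => x n * pd b ψ q := by
        funext q; exact hF q n b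
      rw [h1]
      show fderiv ℝ (fun q => x n * pd b ψ q) p (Pi.single n 1) = _
      rw [fderiv_const_mul (hdi b)]
      have := key n b
      simp only [ContinuousLinearMap.smul_apply, smul_eq_mul]
      rw [← this]; rfl
    calc ∑ n, pd n (fun q => F q n b) p
        = ∑ n, x n * fderiv ℝ (fderiv ℝ ψ) p (Pi.single n 1) (Pi.single b 1) :=
          Finset.sum_congr rfl fun n _ => this n
      _ = ∑ n, x n * fderiv ℝ (fderiv ℝ ψ) p (Pi.single b 1) (Pi.single n 1) :=
          Finset.sum_congr rfl fun n _ => by rw [hsym (Pi.single n 1) (Pi.single b 1)]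
      _ = 0 := hz b
  have hB : ∑ n, pd b (fun q => F q n n) p = 0 := by
    have : ∀ n : Fin 4, pd b (fun q => F q n n) p
        = x n * fderiv ℝ (fderiv ℝ ψ) p (Pi.single b 1) (Pi.single n 1) := by
      intro n
      have h1 : (fun q => F q n n) = fun q => x n * pd n ψ q := by
        funext q; exact hF q n n
      rw [h1]
      show fderiv ℝ (fun q => x n * pd n ψ q) p (Pi.single b 1) = _
      rw [fderiv_const_mul (hdi n)]
      have := key b n
      simp only [ContinuousLinearMap.smul_apply, smul_eq_mul]
      rw [← this]; rfl
    rw [Finset.sum_congr rfl fun n _ => this n]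
    exact hz b
  -- Γ terms: all vanish via hψ0 or htx
  have hG1 : ∑ n : Fin 4, ∑ m : Fin 4, Γ p n n m * F p m b = 0 := by
    have : ∑ n : Fin 4, ∑ m : Fin 4, Γ p n n m * F p m b
        = (∑ n, x n * pd n ψ p) * (∑ m, -(t m * (x m * pd b ψ p))) := by
      rw [Finset.sum_mul_sum]
      refine Finset.sum_congr rfl fun n _ => Finset.sum_congr rfl fun m _ => ?_
      rw [hΓ, hF]; ring
    rw [this, hψ0, zero_mul]
  have hG2 : ∑ n : Fin 4, ∑ m : Fin 4, Γ p m n b * F p n m = 0 := by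
    have : ∑ n : Fin 4, ∑ m : Fin 4, Γ p m n b * F p n m
        = (∑ n, x n * pd n ψ p) * (∑ m, -(x m * pd m ψ p * t b)) := by
      rw [Finset.sum_mul_sum]
      refine Finset.sum_congr rfl fun n _ => Finset.sum_congr rfl fun m _ => ?_
      rw [hΓ, hF]; ring
    rw [this, hψ0, zero_mul]
  have hG3 : ∑ n : Fin 4, ∑ m : Fin 4, Γ p n b m * F p m n = 0 := by
    have : ∑ n : Fin 4, ∑ m : Fin 4, Γ p n b m * F p m n
        = (∑ n, x n * pd n ψ p) * (∑ m, -(t m * x m * pd b ψ p)) := by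
      rw [Finset.sum_mul_sum]
      refine Finset.sum_congr rfl fun n _ => Finset.sum_congr rfl fun m _ => ?_
      rw [hΓ, hF]; ring
    rw [this, hψ0, zero_mul]
  have hG4 : ∑ n : Fin 4, ∑ m : Fin 4, Γ p m b n * F p n m = 0 := by
    have : ∑ n : Fin 4, ∑ m : Fin 4, Γ p m b n * F p n m
        = (∑ n, t n * x n * pd b ψ p) * (∑ m, -(x m * pd m ψ p)) := by
      rw [Finset.sum_mul_sum]
      refine Finset.sum_congr rfl fun n _ => Finset.sum_congr rfl fun m _ => ?_
      rw [hΓ, hF]; ring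
    rw [this]
    have : ∑ n : Fin 4, t n * x n * pd b ψ p = (∑ n, t n * x n) * pd b ψ p := by
      rw [Finset.sum_mul]
    rw [this, htx, zero_mul, zero_mul]
  have hS1 : ∑ n, D p n n b = 0 := by
    have : ∑ n, D p n n b = (∑ n, pd n (fun q => F q n b) p)
        + (∑ n, ∑ m, Γ p n n m * F p m b) - (∑ n, ∑ m, Γ p m n b * F p n m) := by
      rw [Finset.sum_congr rfl fun n _ => hD p n n b]
      rw [Finset.sum_sub_distrib, Finset.sum_add_distrib]
    rw [this, hA, hG1, hG2]; ring
  have hS2 : ∑ n, D p b n n = 0 := by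
    have : ∑ n, D p b n n = (∑ n, pd b (fun q => F q n n) p)
        + (∑ n, ∑ m, Γ p n b m * F p m n) - (∑ n, ∑ m, Γ p m b n * F p n m) := by
      rw [Finset.sum_congr rfl fun n _ => hD p b n n]
      rw [Finset.sum_sub_distrib, Finset.sum_add_distrib]
    rw [this, hB, hG3, hG4]; ring
  rw [hS1, hS2]; ring
end

section
/- Let t ∈ (ℝ⁴)* be a constant covector, and let φ : U → ℝ⁴ be a continuously differentiable vector field on an open set U ⊆ ℝ⁴ with t_a φ^a = 0 on U. Define F^a_b = φ^a t_b. Then: (i) δ^n_a ∂_{[n} F^a_{b]} = (1/2) t_b ∂_a φ^a at every point of U, where ∂ is the coordinate (flat, torsion-free) covariant derivative; and hence (ii) for a scalar field ρ : U → ℝ, the pair consisting of the flat coordinate connection and F satisfies the field equation δ^n_a ∂_{[n} F^a_{b]} = 2πρ t_b on U if and only if φ satisfies Poisson's equation ∂_a φ^a = 4πρ on U. Moreover the torsion of the required connection, T^a_{bc} = F^a_b t_c − F^a_c t_b = φ^a (t_b t_c − t_c t_b), vanishes identically. Thus standard Newtonian gravitation is recovered as the torsion-free special case of the field equation. -/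
lemma pd_mul_const (i : Fin 4) (f : (Fin 4 → ℝ) → ℝ) (c : ℝ) (p : Fin 4 → ℝ)
    (hf : DifferentiableAt ℝ f p) :
    pd i (fun q => f q * c) p = pd i f p * c := by
  simp only [pd, mul_comm _ c, fderiv_const_mul hf c]
  simp [mul_comm]

/-- with `F^a_b = φ^a t_b` for a constant covector `t` and a C¹ field `φ`
with `t_a φ^a = 0` on `U`: (i) `δ^n_a ∂_{[n} F^a_{b]} = (1/2) t_b ∂_a φ^a`;
(ii) the flat coordinate connection and `F` satisfy the field equation
`δ^n_a ∂_{[n} F^a_{b]} = 2πρ t_b` iff `φ` satisfies Poisson's equation `∂_a φ^a = 4πρ`;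
moreover the torsion `F^a_b t_c − F^a_c t_b` vanishes identically. -/
theorem newtonian_gravitation_as_torsion_free_case
    (U : Set (Fin 4 → ℝ)) (hU : IsOpen U)
    (t : Fin 4 → ℝ) (ht : t ≠ 0)
    (φ : (Fin 4 → ℝ) → Fin 4 → ℝ)
    (hφ : ∀ a, ContDiffOn ℝ 1 (fun p => φ p a) U)
    (hφt : ∀ p ∈ U, ∑ a, t a * φ p a = 0)
    (F : (Fin 4 → ℝ) → Fin 4 → Fin 4 → ℝ)
    (hF : ∀ p a b, F p a b = φ p a * t b) :
    (∀ p ∈ U, ∀ b,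
        (1 / 2) * ((∑ n, pd n (fun q => F q n b) p) - (∑ n, pd b (fun q => F q n n) p))
          = (1 / 2) * t b * ∑ a, pd a (fun q => φ q a) p)
    ∧ (∀ ρ : (Fin 4 → ℝ) → ℝ,
        ((∀ p ∈ U, ∀ b,
            (1 / 2) * ((∑ n, pd n (fun q => F q n b) p)
              - (∑ n, pd b (fun q => F q n n) p))
              = 2 * Real.pi * ρ p * t b)
          ↔ (∀ p ∈ U, ∑ a, pd a (fun q => φ q a) p = 4 * Real.pi * ρ p)))
    ∧ (∀ p, ∀ a b c, F p a b * t c - F p a c * t b = 0) := by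
  have hdiff : ∀ a, ∀ p ∈ U, DifferentiableAt ℝ (fun q => φ q a) p := fun a p hp =>
    ((hφ a).differentiableOn one_ne_zero).differentiableAt (hU.mem_nhds hp)
  -- part (i)
  have part1 : ∀ p ∈ U, ∀ b,
      (1 / 2) * ((∑ n, pd n (fun q => F q n b) p) - (∑ n, pd b (fun q => F q n n) p))
        = (1 / 2) * t b * ∑ a, pd a (fun q => φ q a) p := by
    intro p hp b
    have h1 : ∀ n, pd n (fun q => F q n b) p = pd n (fun q => φ q n) p * t b := by
      intro n
      simp only [hF]
      exact pd_mul_const n _ (t b) p (hdiff n p hp)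
    have h2 : (∑ n, pd b (fun q => F q n n) p) = 0 := by
      have h3 : ∀ n, pd b (fun q => F q n n) p = pd b (fun q => φ q n) p * t n := by
        intro n
        simp only [hF]
        exact pd_mul_const b _ (t n) p (hdiff n p hp)
      have h4 : (∑ n, pd b (fun q => φ q n) p * t n)
          = pd b (fun q => ∑ n, φ q n * t n) p := by
        have hfd : fderiv ℝ (fun q => ∑ n, φ q n * t n) p
            = ∑ n, fderiv ℝ (fun q => φ q n * t n) p := by
          exact fderiv_fun_sum (fun n _ => (hdiff n p hp).mul_const (t n))
        simp only [pd, hfd, ContinuousLinearMap.sum_apply]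
        refine Finset.sum_congr rfl fun n _ => ?_
        rw [fderiv_mul_const (hdiff n p hp)]
        simp [mul_comm]
      have h5 : pd b (fun q => ∑ n, φ q n * t n) p = 0 := by
        have heq : (fun q => ∑ n, φ q n * t n) =ᶠ[nhds p] fun _ => (0 : ℝ) := by
          filter_upwards [hU.mem_nhds hp] with q hq
          have := hφt q hq
          rw [← this]
          exact Finset.sum_congr rfl fun n _ => mul_comm _ _
        simp [pd, heq.fderiv_eq]
      rw [Finset.sum_congr rfl fun n _ => h3 n, h4, h5]
    rw [h2]
    simp only [h1, ← Finset.sum_mul]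
    ring
  refine ⟨part1, fun ρ => ?_, fun p a b c => by rw [hF, hF]; ring⟩
  constructor
  · intro h p hp
    obtain ⟨b, hb⟩ : ∃ b, t b ≠ 0 := by
      by_contra hc
      push_neg at hc
      exact ht (funext hc)
    have := (h p hp b).symm.trans (part1 p hp b)
    -- 2πρ t b = (1/2) t b * ∑ ...
    field_simp at this
    rcases mul_left_cancel₀ hb ((by ring_nf; ring_nf at this; rw [← this]; ring : t b * (∑ a, pd a (fun q => φ q a) p) = t b * (4 * Real.pi * ρ p))) with h'
    exact h'
  · intro h p hp b
    rw [part1 p hp b, h p hp]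
    ring
end

section
/- Let t ∈ (ℝ⁴)* be a constant covector, x ∈ ℝ⁴ a constant vector with t_a x^a = 0, ψ : U → ℝ continuously differentiable, and φ : U → ℝ⁴ continuous on an open set U ⊆ ℝ⁴. Define F̌^a_b = φ^a t_b + x^a ∂_b ψ and the connection Γ̌^a_{bc} = −x^a (∂_b ψ) t_c. Let γ : I → U be a twice differentiable curve (I ⊆ ℝ an interval) whose tangent is unit timelike: t_a γ̇^a(s) = 1 for all s ∈ I. Then γ satisfies the Newtonian equation of motion γ̈^a(s) = −φ^a(γ(s)) for all s ∈ I if and only if γ satisfies the torsional force equation γ̈^a(s) + Γ̌^a_{bc}(γ(s)) γ̇^b(s) γ̇^c(s) = −F̌^a_b(γ(s)) γ̇^b(s) for all s ∈ I. -/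
/-- with `F̌^a_b = φ^a t_b + x^a ∂_b ψ` and `Γ̌^a_{bc} = −x^a (∂_b ψ) t_c`,
a twice differentiable unit-timelike curve `γ` (`t_a γ̇^a = 1` on the interval `I`)
satisfies the Newtonian equation of motion `γ̈^a = −φ^a(γ)` iff it satisfies the
torsional force equation `γ̈^a + Γ̌^a_{bc}(γ) γ̇^b γ̇^c = −F̌^a_b(γ) γ̇^b`. -/
theorem newtonian_iff_torsional_equation_of_motion
    (U : Set (Fin 4 → ℝ)) (hU : IsOpen U)
    (t : Fin 4 → ℝ) (x : Fin 4 → ℝ)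
    (htx : ∑ a, t a * x a = 0)
    (ψ : (Fin 4 → ℝ) → ℝ) (hψ : ContDiffOn ℝ 1 ψ U)
    (φ : (Fin 4 → ℝ) → Fin 4 → ℝ)
    (hφ : ∀ a, ContinuousOn (fun p => φ p a) U)
    (F : (Fin 4 → ℝ) → Fin 4 → Fin 4 → ℝ)
    (hF : ∀ p a b, F p a b = φ p a * t b + x a * pd b ψ p)
    (Γ : (Fin 4 → ℝ) → Fin 4 → Fin 4 → Fin 4 → ℝ)
    (hΓ : ∀ p a b c, Γ p a b c = -(x a * pd b ψ p * t c))
    (I : Set ℝ) (hI : I.OrdConnected)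
    (γ : ℝ → Fin 4 → ℝ)
    (hγU : ∀ s ∈ I, γ s ∈ U)
    (hγdiff : ∀ a, ∀ s ∈ I, DifferentiableAt ℝ (fun u => γ u a) s ∧
        DifferentiableAt ℝ (deriv fun u => γ u a) s)
    (hunit : ∀ s ∈ I, ∑ a, t a * deriv (fun u => γ u a) s = 1) :
    (∀ s ∈ I, ∀ a, deriv (deriv fun u => γ u a) s = -φ (γ s) a)
    ↔ (∀ s ∈ I, ∀ a,
        deriv (deriv fun u => γ u a) s
          + ∑ b, ∑ c, Γ (γ s) a b c
              * deriv (fun u => γ u b) s * deriv (fun u => γ u c) s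
          = -∑ b, F (γ s) a b * deriv (fun u => γ u b) s) := by
  have key : ∀ s ∈ I, ∀ a,
      (∑ b, ∑ c, Γ (γ s) a b c * deriv (fun u => γ u b) s * deriv (fun u => γ u c) s)
        = -(x a * ∑ b, pd b ψ (γ s) * deriv (fun u => γ u b) s) := by
    intro s hs a
    have h1 := hunit s hs
    have hb : ∀ b : Fin 4,
        (∑ c, Γ (γ s) a b c * deriv (fun u => γ u b) s * deriv (fun u => γ u c) s)
          = -(x a * (pd b ψ (γ s) * deriv (fun u => γ u b) s)) := by
      intro b
      have : (∑ c, Γ (γ s) a b c * deriv (fun u => γ u b) s * deriv (fun u => γ u c) s)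
          = -(x a * (pd b ψ (γ s) * deriv (fun u => γ u b) s)) *
            ∑ c, t c * deriv (fun u => γ u c) s := by
        rw [Finset.mul_sum]
        refine Finset.sum_congr rfl fun c _ => ?_
        rw [hΓ]; ring
      rw [this, h1, mul_one]
    rw [Finset.sum_congr rfl fun b _ => hb b, Finset.mul_sum, ← Finset.sum_neg_distrib]
  have keyF : ∀ s ∈ I, ∀ a,
      (∑ b, F (γ s) a b * deriv (fun u => γ u b) s)
        = φ (γ s) a + x a * ∑ b, pd b ψ (γ s) * deriv (fun u => γ u b) s := by
    intro s hs a
    have h1 := hunit s hs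
    have : (∑ b, F (γ s) a b * deriv (fun u => γ u b) s)
        = φ (γ s) a * (∑ b, t b * deriv (fun u => γ u b) s)
          + x a * ∑ b, pd b ψ (γ s) * deriv (fun u => γ u b) s := by
      rw [Finset.mul_sum, Finset.mul_sum, ← Finset.sum_add_distrib]
      refine Finset.sum_congr rfl fun b _ => ?_
      rw [hF]; ring
    rw [this, h1, mul_one]
  constructor
  · intro h s hs a
    rw [key s hs a, keyF s hs a, h s hs a]; ring
  · intro h s hs a
    have := h s hs a
    rw [key s hs a, keyF s hs a] at this
    linarith
end
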